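/- arXiv:math/0310350 — 5 statements merged into one kernel-verified Lean document; each statement's English description precedes it below -/
import Mathlib

section
/- For every r > 0, the function S_r(z) = lim_{N→∞} Σ_{k=-N}^{N} (e^{2kr} + z)/(e^{2kr} − z) defines a meromorphic function on ℂ \ {0} whose poles are exactly the simple poles at the points e^{2kr}, k ∈ ℤ. -/
open Complex Filter Topology

/-- Partial symmetric sums of the annulus Schwarz kernel
`S_r(z) = lim_{N→∞} Σ_{k=-N}^{N} (e^{2kr}+z)/(e^{2kr}-z)`. -/
noncomputable def annulusSum (r : ℝ) (z : ℂ) (N : ℕ) : ℂ :=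
  ∑ k ∈ Finset.Icc (-(N : ℤ)) (N : ℤ),
    (Complex.exp (2 * (k : ℂ) * (r : ℂ)) + z) / (Complex.exp (2 * (k : ℂ) * (r : ℂ)) - z)

/-- The set of poles `{e^{2kr} : k ∈ ℤ}`. -/
def annulusPoles (r : ℝ) : Set ℂ :=
  {z | ∃ k : ℤ, z = Complex.exp (2 * (k : ℂ) * (r : ℂ))}

noncomputable def pF (q : ℝ) (n : ℕ) (z : ℂ) : ℂ :=
  2 * (q:ℂ)^(n+1) * (1 - z^2) / (((q:ℂ)^(n+1) - z) * (1 - (q:ℂ)^(n+1) * z))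

noncomputable def Sq (q : ℝ) (z : ℂ) : ℂ := (1+z)/(1-z) + ∑' n, pF q n z

-- injectivity of j ↦ (q:ℂ)^j
lemma QINJ {q : ℝ} (hq : 1 < q) {j₁ j₂ : ℤ} (h : j₁ ≠ j₂) : ((q:ℂ))^j₁ ≠ ((q:ℂ))^j₂ := by
  have h0 : (0:ℝ) < q := lt_trans one_pos hq
  intro hc
  rw [show ((q:ℝ):ℂ)^j₁ = ((q^j₁ : ℝ) : ℂ) by push_cast; ring,
      show ((q:ℝ):ℂ)^j₂ = ((q^j₂ : ℝ) : ℂ) by push_cast; ring] at hc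
  exact h (zpow_right_injective₀ h0 (ne_of_gt hq) (Complex.ofReal_injective hc))

lemma QNE0 {q : ℝ} (hq : 1 < q) (j : ℤ) : ((q:ℝ):ℂ)^j ≠ 0 :=
  zpow_ne_zero _ (by exact_mod_cast ne_of_gt (lt_trans one_pos hq))

-- isolation lemma
lemma ISOL {q : ℝ} (hq : 1 < q) (z₀ : ℂ) (h0 : z₀ ≠ 0) (A : Set ℤ)
    (hA : ∀ j ∈ A, ((q:ℝ):ℂ)^j ≠ z₀) :
    ∃ ε > 0, ∀ j ∈ A, ε ≤ ‖((q:ℝ):ℂ)^j - z₀‖ := by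
  classical
  have h0q : (0:ℝ) < q := lt_trans one_pos hq
  have hlogq : 0 < Real.log q := Real.log_pos hq
  set m : ℝ := ‖z₀‖ with hm
  have hm0 : 0 < m := by simpa [hm] using norm_pos_iff.mpr h0
  set a : ℤ := ⌈Real.log (m/2) / Real.log q⌉
  set b : ℤ := ⌊Real.log (2*m) / Real.log q⌋
  set F : Finset ℤ := (Finset.Icc a b).filter (fun j => j ∈ A)
  set T : Finset ℝ := insert (m/2) (F.image fun j => ‖((q:ℝ):ℂ)^j - z₀‖)
  have hTne : T.Nonempty := ⟨m/2, Finset.mem_insert_self _ _⟩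
  refine ⟨T.min' hTne, ?_, ?_⟩
  · rw [gt_iff_lt, Finset.lt_min'_iff]
    intro x hx
    rcases Finset.mem_insert.mp hx with h | h
    · subst h; linarith
    · obtain ⟨j, hj, rfl⟩ := Finset.mem_image.mp h
      have := hA j (Finset.mem_filter.mp hj).2
      simpa [norm_pos_iff, sub_ne_zero] using this
  · intro j hj
    by_cases hjF : j ∈ Finset.Icc a b
    · exact Finset.min'_le _ _ (Finset.mem_insert_of_mem
        (Finset.mem_image.mpr ⟨j, Finset.mem_filter.mpr ⟨hjF, hj⟩, rfl⟩))
    · have hle : T.min' hTne ≤ m/2 := Finset.min'_le _ _ (Finset.mem_insert_self _ _)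
      have hnq : ‖((q:ℝ):ℂ)^j‖ = q^j := by
        rw [show ((q:ℝ):ℂ)^j = ((q^j:ℝ):ℂ) by push_cast; ring]
        rw [Complex.norm_real, Real.norm_eq_abs, abs_of_pos (zpow_pos h0q j)]
      have hkey : q^j < m/2 ∨ 2*m < q^j := by
        by_contra hcon
        push_neg at hcon
        obtain ⟨h1, h2⟩ := hcon
        apply hjF
        rw [Finset.mem_Icc]
        constructor
        · rw [Int.ceil_le, div_le_iff₀ hlogq]
          calc Real.log (m/2) ≤ Real.log (q^j) := Real.log_le_log (by positivity) h1
            _ = j * Real.log q := Real.log_zpow _ _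
        · rw [Int.le_floor, le_div_iff₀ hlogq]
          calc (j:ℝ) * Real.log q = Real.log (q^j) := (Real.log_zpow _ _).symm
            _ ≤ Real.log (2*m) := Real.log_le_log (zpow_pos h0q j) h2
      have hdist : m/2 ≤ ‖((q:ℝ):ℂ)^j - z₀‖ := by
        have := abs_norm_sub_norm_le (((q:ℝ):ℂ)^j) z₀
        rw [hnq] at this
        rcases hkey with h | h
        · have := abs_le.mp this
          have hq0 : (0:ℝ) < q^j := zpow_pos h0q j
          linarith [this.1]
        · have := abs_le.mp this
          linarith [this.1, this.2, abs_nonneg (q^j - m)]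
      linarith

lemma BOUND {q : ℝ} (hq : 1 < q) (s : Set ℂ) (R ε : ℝ) (hR : 0 ≤ R) (hε : 0 < ε)
    (del : ℕ → Prop)
    (hhigh : ∀ z ∈ s, ‖z‖ ≤ R)
    (hd1 : ∀ n, ¬ del n → ∀ z ∈ s, ε ≤ ‖((q:ℝ):ℂ)^(n+1) - z‖)
    (hd2 : ∀ n, ¬ del n → ∀ z ∈ s, ε ≤ ‖(((q:ℝ):ℂ)^(n+1))⁻¹ - z‖) :
    ∃ C : ℝ, 0 < C ∧ ∀ n, ¬ del n → ∀ z ∈ s, ‖pF q n z‖ ≤ C * (q⁻¹)^n := by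
  have h0q : (0:ℝ) < q := lt_trans one_pos hq
  refine ⟨max (4*(1+R^2)/ε) (4*R*(1+R^2)/ε^2), lt_max_of_lt_left (by positivity), ?_⟩
  set C := max (4*(1+R^2)/ε) (4*R*(1+R^2)/ε^2) with hC
  intro n hn z hz
  set a : ℝ := q^(n+1) with ha
  have ha0 : 0 < a := pow_pos h0q _
  set A : ℂ := ((q:ℝ):ℂ)^(n+1) with hA
  have hAa : ‖A‖ = a := by
    rw [hA, ha]; rw [show ((q:ℝ):ℂ)^(n+1) = ((q^(n+1):ℝ):ℂ) by push_cast; ring]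
    rw [Complex.norm_real, Real.norm_eq_abs, abs_of_pos (pow_pos h0q _)]
  have hA0 : A ≠ 0 := pow_ne_zero _ (by exact_mod_cast ne_of_gt h0q)
  set w : ℝ := (q⁻¹)^n with hw
  have hw0 : 0 < w := by positivity
  have haw : a * w = q := by
    rw [ha, hw, inv_pow, pow_succ]
    field_simp
  have hnum : ‖2 * A * (1 - z^2)‖ ≤ 2*a*(1+R^2) := by
    rw [norm_mul, norm_mul]
    have h1 : ‖(1:ℂ) - z^2‖ ≤ 1 + R^2 := by
      calc ‖(1:ℂ) - z^2‖ ≤ ‖(1:ℂ)‖ + ‖z^2‖ := norm_sub_le _ _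
        _ = 1 + ‖z‖^2 := by rw [norm_one, norm_pow]
        _ ≤ 1 + R^2 := by nlinarith [norm_nonneg z, hhigh z hz]
    calc ‖(2:ℂ)‖ * ‖A‖ * ‖1 - z^2‖ = 2 * a * ‖1 - z^2‖ := by
          rw [hAa]; norm_num
      _ ≤ 2*a*(1+R^2) := by nlinarith
  have hd2' : a * ε ≤ ‖1 - A*z‖ := by
    have : (1:ℂ) - A*z = A * (A⁻¹ - z) := by field_simp
    rw [this, norm_mul, hAa]
    exact mul_le_mul_of_nonneg_left (hd2 n hn z hz) (le_of_lt ha0)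
  have key : ∀ d : ℝ, 0 < d → d ≤ ‖A - z‖ → 2*a*(1+R^2) ≤ C * w * (d * (a*ε)) →
      ‖pF q n z‖ ≤ C * w := by
    intro d hd0 hd hcore
    have hden : d * (a*ε) ≤ ‖A - z‖ * ‖1 - A*z‖ := by
      apply mul_le_mul hd hd2' (by positivity) (norm_nonneg _)
    have hpf : ‖pF q n z‖ ≤ (2*a*(1+R^2)) / (d * (a*ε)) := by
      rw [pF, ← hA, norm_div,
        show ‖(A - z)*(1 - A*z)‖ = ‖A-z‖*‖1-A*z‖ from norm_mul _ _]
      exact div_le_div₀ (by positivity) hnum (by positivity) hden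
    refine le_trans hpf ?_
    rw [div_le_iff₀ (by positivity)]
    exact hcore
  by_cases hcase : 2*R ≤ a
  · -- far case : ‖A - z‖ ≥ a/2
    have hd : a/2 ≤ ‖A - z‖ := by
      have h1 : ‖A‖ - ‖z‖ ≤ ‖A - z‖ := norm_sub_norm_le _ _
      rw [hAa] at h1
      have := hhigh z hz
      linarith
    apply key (a/2) (by positivity) hd
    have hCge : 4*(1+R^2)/ε ≤ C := le_max_left _ _
    have hCe : 4*(1+R^2) ≤ C * ε := by
      rw [div_le_iff₀ hε] at hCge; linarith
    have h1 : 4*(1+R^2) ≤ C*ε*q := by nlinarith [hε, hq]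
    have h2 : C*w*(a/2*(a*ε)) = (C*ε*q)*(a/2) := by rw [← haw]; ring
    rw [h2]
    nlinarith [mul_le_mul_of_nonneg_right h1 (by positivity : (0:ℝ) ≤ a/2)]
  · -- near case : ‖A - z‖ ≥ ε
    push_neg at hcase
    have hR0 : 0 < R := by nlinarith
    apply key ε hε (hd1 n hn z hz)
    have hCge : 4*R*(1+R^2)/ε^2 ≤ C := le_max_right _ _
    have hCe : 4*R*(1+R^2) ≤ C * ε^2 := by
      rw [div_le_iff₀ (by positivity)] at hCge; linarith
    have hq1 : 1 < q := hq
    have h2 : C*w*(ε*(a*ε)) = (C*ε^2)*q := by rw [← haw]; ring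
    rw [h2]
    nlinarith [mul_le_mul_of_nonneg_right hCe (le_of_lt h0q),
      mul_nonneg (mul_nonneg (by norm_num : (0:ℝ) ≤ 4) hR0.le) (by positivity : (0:ℝ) ≤ 1+R^2)]


lemma ANA {q : ℝ} (hq : 1 < q) (z₀ : ℂ) (h0 : z₀ ≠ 0) (del : ℕ → Prop) [DecidablePred del]
    (hdel : ∀ n, ¬ del n → ((q:ℝ):ℂ)^(n+1) ≠ z₀ ∧ (((q:ℝ):ℂ)^(n+1))⁻¹ ≠ z₀) :
    AnalyticAt ℂ (fun z => ∑' n, if del n then 0 else pF q n z) z₀ ∧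
    ∃ δ > 0, ∀ z ∈ Metric.ball z₀ δ,
      Summable (fun n => if del n then 0 else pF q n z) := by
  have h0q : (0:ℝ) < q := lt_trans one_pos hq
  obtain ⟨ε, hε0, hε⟩ := ISOL hq z₀ h0 {j : ℤ | ((q:ℝ):ℂ)^j ≠ z₀} (fun j hj => hj)
  set δ := ε/2 with hδ
  have hδ0 : 0 < δ := by positivity
  set s := Metric.ball z₀ δ with hs
  have hb1 : ∀ n, ¬ del n → ∀ z ∈ s, δ ≤ ‖((q:ℝ):ℂ)^(n+1) - z‖ := by
    intro n hn z hz
    have h1 : ε ≤ ‖((q:ℝ):ℂ)^(((n:ℤ))+1) - z₀‖ := by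
      apply hε
      show ((q:ℝ):ℂ)^(((n:ℤ))+1) ≠ z₀
      rw [show ((n:ℤ)+1) = ((n+1 : ℕ) : ℤ) by push_cast; ring, zpow_natCast]
      exact (hdel n hn).1
    rw [show ((q:ℝ):ℂ)^(((n:ℤ))+1) = ((q:ℝ):ℂ)^(n+1) by
      rw [show ((n:ℤ)+1) = ((n+1 : ℕ) : ℤ) by push_cast; ring, zpow_natCast]] at h1
    have h2 : ‖z - z₀‖ < δ := by
      rw [hs] at hz; rw [← dist_eq_norm]; exact Metric.mem_ball.mp hz
    have h3 : ‖((q:ℝ):ℂ)^(n+1) - z₀‖ ≤ ‖((q:ℝ):ℂ)^(n+1) - z‖ + ‖z - z₀‖ :=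
      norm_sub_le_norm_sub_add_norm_sub _ _ _
    rw [hδ] at h2 ⊢
    linarith
  have hb2 : ∀ n, ¬ del n → ∀ z ∈ s, δ ≤ ‖(((q:ℝ):ℂ)^(n+1))⁻¹ - z‖ := by
    intro n hn z hz
    have heq : (((q:ℝ):ℂ)^(n+1))⁻¹ = ((q:ℝ):ℂ)^(-((n:ℤ)+1)) := by
      rw [show (-((n:ℤ)+1)) = -((n+1 : ℕ) : ℤ) by push_cast; ring, zpow_neg, zpow_natCast]
    have h1 : ε ≤ ‖((q:ℝ):ℂ)^(-((n:ℤ)+1)) - z₀‖ := by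
      apply hε
      show ((q:ℝ):ℂ)^(-((n:ℤ)+1)) ≠ z₀
      rw [← heq]
      exact (hdel n hn).2
    rw [← heq] at h1
    have h2 : ‖z - z₀‖ < δ := by
      rw [hs] at hz; rw [← dist_eq_norm]; exact Metric.mem_ball.mp hz
    have h3 : ‖(((q:ℝ):ℂ)^(n+1))⁻¹ - z₀‖ ≤ ‖(((q:ℝ):ℂ)^(n+1))⁻¹ - z‖ + ‖z - z₀‖ :=
      norm_sub_le_norm_sub_add_norm_sub _ _ _
    rw [hδ] at h2 ⊢
    linarith
  have hhigh : ∀ z ∈ s, ‖z‖ ≤ ‖z₀‖ + δ := by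
    intro z hz
    have h2 : ‖z - z₀‖ < δ := by
      rw [hs] at hz; rw [← dist_eq_norm]; exact Metric.mem_ball.mp hz
    have := norm_sub_norm_le z z₀
    linarith
  obtain ⟨C, hC0, hC⟩ := BOUND hq s (‖z₀‖ + δ) δ (by positivity) hδ0 del hhigh hb1 hb2
  have hu : Summable (fun n : ℕ => C * (q⁻¹)^n) := by
    apply Summable.mul_left
    apply summable_geometric_of_lt_one (by positivity)
    rw [inv_lt_one_iff₀]
    right; exact hq
  have hbound : ∀ (n : ℕ) (z : ℂ), z ∈ s → ‖(if del n then 0 else pF q n z)‖ ≤ C * (q⁻¹)^n := by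
    intro n z hz
    by_cases hn : del n
    · rw [if_pos hn, norm_zero]; positivity
    · rw [if_neg hn]; exact hC n hn z hz
  constructor
  · have hdiff : DifferentiableOn ℂ
        (fun z => ∑' n, if del n then 0 else pF q n z) s := by
      apply differentiableOn_tsum_of_summable_norm hu ?_ Metric.isOpen_ball hbound
      intro n
      by_cases hn : del n
      · simp only [hn, if_true]
        exact differentiableOn_const 0
      · simp only [hn, if_false]
        unfold pF
        apply DifferentiableOn.div
        · exact (Differentiable.mul (differentiable_const _)
            ((differentiable_const 1).sub (differentiable_id.pow 2))).differentiableOn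
        · exact (Differentiable.mul ((differentiable_const _).sub differentiable_id)
            ((differentiable_const 1).sub
              ((differentiable_const _).mul differentiable_id))).differentiableOn
        · intro z hz
          apply mul_ne_zero
          · intro hcon
            have h1 := hb1 n hn z hz
            rw [show ((q:ℝ):ℂ)^(n+1) - z = 0 from hcon] at h1
            rw [norm_zero] at h1
            linarith
          · intro hcon
            have h1 := hb2 n hn z hz
            have hA0 : ((q:ℝ):ℂ)^(n+1) ≠ 0 := pow_ne_zero _ (by exact_mod_cast ne_of_gt h0q)
            have hz' : (((q:ℝ):ℂ)^(n+1))⁻¹ - z = 0 := by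
              have : ((q:ℝ):ℂ)^(n+1) * z = 1 := by
                have := sub_eq_zero.mp hcon
                linear_combination -this
              field_simp
              linear_combination -this
            rw [hz', norm_zero] at h1
            linarith
    exact hdiff.analyticAt (Metric.ball_mem_nhds z₀ hδ0)
  · exact ⟨δ, hδ0, fun z hz => (hu.of_norm_bounded (fun n => hbound n z hz))⟩

lemma SYM (g : ℤ → ℂ) (N : ℕ) :
    ∑ k ∈ Finset.Icc (-(N:ℤ)) (N:ℤ), g k
      = g 0 + ∑ n ∈ Finset.range N, (g ((n:ℤ)+1) + g (-((n:ℤ)+1))) := by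
  induction N with
  | zero => simp
  | succ N ih =>
    have h1 : Finset.Icc (-(((N:ℤ))+1)) ((N:ℤ)+1)
        = insert (((N:ℤ))+1) (insert (-((N:ℤ)+1)) (Finset.Icc (-(N:ℤ)) (N:ℤ))) := by
      ext x
      simp only [Finset.mem_Icc, Finset.mem_insert]
      omega
    rw [show -((N+1:ℕ):ℤ) = -((N:ℤ)+1) by push_cast; ring,
        show ((N+1:ℕ):ℤ) = ((N:ℤ)+1) by push_cast; ring, h1,
        Finset.sum_insert, Finset.sum_insert, ih, Finset.sum_range_succ]
    · push_cast
      ring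
    · simp only [Finset.mem_Icc]; omega
    · simp only [Finset.mem_insert, Finset.mem_Icc]; omega

lemma PAIR (a z : ℂ) (ha : a ≠ 0) (h1 : a - z ≠ 0) (h2 : 1 - a*z ≠ 0) :
    (a + z)/(a - z) + (a⁻¹ + z)/(a⁻¹ - z) = 2*a*(1-z^2)/((a - z)*(1 - a*z)) := by
  have h3 : a⁻¹ - z ≠ 0 := by
    intro hc
    have : a * (a⁻¹ - z) = 0 := by rw [hc, mul_zero]
    rw [mul_sub, mul_inv_cancel₀ ha] at this
    exact h2 (by linear_combination this)
  field_simp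
  ring

lemma TERM0 (z₀ : ℂ) (h : z₀ ≠ 1) : AnalyticAt ℂ (fun z => (1+z)/(1-z)) z₀ := by
  apply AnalyticAt.div
  · exact analyticAt_const.add (analyticAt_id)
  · exact analyticAt_const.sub (analyticAt_id)
  · exact sub_ne_zero.mpr (Ne.symm h)

lemma TFULL {q : ℝ} (hq : 1 < q) (w : ℂ) (hw0 : w ≠ 0)
    (hwp : ∀ j : ℤ, j ≠ 0 → ((q:ℝ):ℂ)^j ≠ w) :
    AnalyticAt ℂ (fun z => ∑' n, pF q n z) w := by
  have hdel : ∀ n : ℕ, ¬ (fun _ : ℕ => False) n →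
      ((q:ℝ):ℂ)^(n+1) ≠ w ∧ (((q:ℝ):ℂ)^(n+1))⁻¹ ≠ w := by
    intro n _
    constructor
    · rw [← zpow_natCast]
      exact hwp _ (by exact_mod_cast Nat.succ_ne_zero n)
    · rw [← zpow_natCast, ← zpow_neg]
      apply hwp
      omega
  have h := (ANA hq w hw0 (fun _ => False) hdel).1
  have heq : (fun z => ∑' n, if False then 0 else pF q n z)
      = (fun z => ∑' n, pF q n z) := by
    funext z
    exact tsum_congr (fun n => if_neg not_false)
  rwa [heq] at h

lemma SUMM {q : ℝ} (hq : 1 < q) (w : ℂ) (hw0 : w ≠ 0)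
    (hwp : ∀ j : ℤ, ((q:ℝ):ℂ)^j ≠ w) :
    Summable (fun n => pF q n w) := by
  have hdel : ∀ n : ℕ, ¬ (fun _ : ℕ => False) n →
      ((q:ℝ):ℂ)^(n+1) ≠ w ∧ (((q:ℝ):ℂ)^(n+1))⁻¹ ≠ w := by
    intro n _
    constructor
    · rw [← zpow_natCast]; exact hwp _
    · rw [← zpow_natCast, ← zpow_neg]; exact hwp _
  obtain ⟨δ, hδ0, hs⟩ := (ANA hq w hw0 (fun _ => False) hdel).2
  exact (hs w (Metric.mem_ball_self hδ0)).congr (fun n => if_neg not_false)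

lemma TPRIME {q : ℝ} (hq : 1 < q) (m : ℕ) (p : ℂ) (hp0 : p ≠ 0)
    (hdel : ∀ n : ℕ, ¬ n = m → ((q:ℝ):ℂ)^(n+1) ≠ p ∧ (((q:ℝ):ℂ)^(n+1))⁻¹ ≠ p) :
    AnalyticAt ℂ (fun z => ∑' n, if n = m then 0 else pF q n z) p :=
  (ANA hq p hp0 (fun n => n = m) hdel).1


/-- For every `r > 0`, `S_r` defines a meromorphic function on `ℂ \ {0}`
whose poles are exactly the simple poles at the points `e^{2kr}`, `k ∈ ℤ`. -/
theorem stmt0 (r : ℝ) (hr : 0 < r) :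
    ∃ S : ℂ → ℂ,
      (∀ z : ℂ, z ≠ 0 → z ∉ annulusPoles r →
        Tendsto (fun N => annulusSum r z N) atTop (𝓝 (S z))) ∧
      (∀ z : ℂ, z ≠ 0 → z ∉ annulusPoles r → AnalyticAt ℂ S z) ∧
      (∀ k : ℤ, ∃ g : ℂ → ℂ,
        AnalyticAt ℂ g (Complex.exp (2 * (k : ℂ) * (r : ℂ))) ∧
        g (Complex.exp (2 * (k : ℂ) * (r : ℂ))) ≠ 0 ∧
        ∀ᶠ z in 𝓝[≠] (Complex.exp (2 * (k : ℂ) * (r : ℂ))),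
          S z = g z / (z - Complex.exp (2 * (k : ℂ) * (r : ℂ)))) := by
  set q : ℝ := Real.exp (2*r) with hqdef
  have hq : 1 < q := Real.one_lt_exp_iff.mpr (by linarith)
  have h0q : (0:ℝ) < q := lt_trans one_pos hq
  have hq0C : ((q:ℝ):ℂ) ≠ 0 := by exact_mod_cast ne_of_gt h0q
  have hEXP : ∀ k : ℤ, Complex.exp (2*(k:ℂ)*(r:ℂ)) = ((q:ℝ):ℂ)^k := by
    intro k
    rw [show (2*(k:ℂ)*(r:ℂ)) = (k:ℂ) * (((2*r : ℝ)):ℂ) by push_cast; ring,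
        Complex.exp_int_mul, ← Complex.ofReal_exp]
  refine ⟨Sq q, ?_, ?_, ?_⟩
  · -- convergence
    intro z hz0 hzp
    have hznp : ∀ j : ℤ, ((q:ℝ):ℂ)^j ≠ z := by
      intro j hc
      exact hzp ⟨j, by rw [hEXP j]; exact hc.symm⟩
    have hSumm := SUMM hq z hz0 hznp
    have hform : ∀ N : ℕ,
        annulusSum r z N = (1+z)/(1-z) + ∑ n ∈ Finset.range N, pF q n z := by
      intro N
      unfold annulusSum
      have e1 : ∑ k ∈ Finset.Icc (-(N:ℤ)) (N:ℤ),
            (Complex.exp (2*(k:ℂ)*(r:ℂ)) + z)/(Complex.exp (2*(k:ℂ)*(r:ℂ)) - z)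
          = ∑ k ∈ Finset.Icc (-(N:ℤ)) (N:ℤ), (((q:ℝ):ℂ)^k + z)/(((q:ℝ):ℂ)^k - z) :=
        Finset.sum_congr rfl (fun k _ => by rw [hEXP k])
      have e2 : (((q:ℝ):ℂ)^(0:ℤ) + z)/(((q:ℝ):ℂ)^(0:ℤ) - z) = (1+z)/(1-z) := by
        rw [zpow_zero]
      have e3 : ∑ n ∈ Finset.range N,
            ((((q:ℝ):ℂ)^((n:ℤ)+1) + z)/(((q:ℝ):ℂ)^((n:ℤ)+1) - z)
              + (((q:ℝ):ℂ)^(-((n:ℤ)+1)) + z)/(((q:ℝ):ℂ)^(-((n:ℤ)+1)) - z))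
          = ∑ n ∈ Finset.range N, pF q n z := by
        refine Finset.sum_congr rfl (fun n _ => ?_)
        have hc1 : ((q:ℝ):ℂ)^((n:ℤ)+1) = ((q:ℝ):ℂ)^(n+1 : ℕ) := by
          rw [show ((n:ℤ)+1) = ((n+1:ℕ):ℤ) by push_cast; ring, zpow_natCast]
        have hc2 : ((q:ℝ):ℂ)^(-((n:ℤ)+1)) = (((q:ℝ):ℂ)^(n+1 : ℕ))⁻¹ := by
          rw [show (-((n:ℤ)+1)) = -((n+1:ℕ):ℤ) by push_cast; ring, zpow_neg, zpow_natCast]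
        show (((q:ℝ):ℂ)^((n:ℤ)+1) + z)/(((q:ℝ):ℂ)^((n:ℤ)+1) - z)
            + (((q:ℝ):ℂ)^(-((n:ℤ)+1)) + z)/(((q:ℝ):ℂ)^(-((n:ℤ)+1)) - z) = pF q n z
        rw [hc1, hc2]
        have hane : ((q:ℝ):ℂ)^(n+1:ℕ) ≠ 0 := pow_ne_zero _ hq0C
        have hsub : ((q:ℝ):ℂ)^(n+1:ℕ) - z ≠ 0 := by
          rw [← hc1]; exact sub_ne_zero.mpr (hznp ((n:ℤ)+1))
        have h2 : 1 - ((q:ℝ):ℂ)^(n+1:ℕ)*z ≠ 0 := by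
          intro hc
          have hc' : ((q:ℝ):ℂ)^(n+1:ℕ) * z = 1 := by linear_combination -hc
          exact hznp (-((n:ℤ)+1))
            (by rw [hc2]; exact inv_eq_of_mul_eq_one_right hc')
        exact PAIR _ z hane hsub h2
      rw [e1, SYM (fun k => (((q:ℝ):ℂ)^k + z)/(((q:ℝ):ℂ)^k - z)) N, e2, e3]
    have htend := (hSumm.hasSum.tendsto_sum_nat).const_add ((1+z)/(1-z))
    exact htend.congr (fun N => (hform N).symm)
  · -- analyticity off the poles
    intro z hz0 hzp
    have hznp : ∀ j : ℤ, ((q:ℝ):ℂ)^j ≠ z := by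
      intro j hc
      exact hzp ⟨j, by rw [hEXP j]; exact hc.symm⟩
    have h1 : AnalyticAt ℂ (fun w : ℂ => (1+w)/(1-w)) z :=
      TERM0 z (fun hc => hznp 0 (by rw [zpow_zero, hc]))
    have h2 := TFULL hq z hz0 (fun j _ => hznp j)
    exact h1.add h2
  · -- poles
    intro k
    rw [hEXP k]
    rcases k with n | m
    · simp only [Int.ofNat_eq_coe]
      rcases n with _ | m
      · -- k = 0, pole at 1
        rw [show (((0:ℕ):ℤ)) = (0:ℤ) from rfl, zpow_zero]
        refine ⟨fun z => -(1+z) + (z-1) * (∑' n, pF q n z), ?_, ?_, ?_⟩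
        · have hT := TFULL hq 1 one_ne_zero (fun j hj => by
            rw [show (1:ℂ) = ((q:ℝ):ℂ)^(0:ℤ) by rw [zpow_zero]]
            exact QINJ hq hj)
          exact ((analyticAt_const.add analyticAt_id).neg).add
            ((analyticAt_id.sub analyticAt_const).mul hT)
        · simp
        · filter_upwards [self_mem_nhdsWithin] with z hz
          have hz1 : z ≠ 1 := hz
          have h1 : z - 1 ≠ 0 := sub_ne_zero.mpr hz1
          have h2 : (1:ℂ) - z ≠ 0 := sub_ne_zero.mpr (Ne.symm hz1)
          show (1+z)/(1-z) + (∑' n, pF q n z)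
              = (-(1+z) + (z-1) * (∑' n, pF q n z))/(z-1)
          field_simp
          ring
      · -- k = m+1
        rw [show (((m+1:ℕ)):ℤ) = ((m+1:ℕ):ℤ) from rfl, zpow_natCast]
        set a : ℂ := ((q:ℝ):ℂ)^(m+1:ℕ) with hadef
        have ha0 : a ≠ 0 := pow_ne_zero _ hq0C
        have hna : 0 < ‖a‖ := norm_pos_iff.mpr ha0
        have hao : ((q:ℝ):ℂ)^((m:ℤ)+1) = a := by
          rw [hadef, show ((m:ℤ)+1) = ((m+1:ℕ):ℤ) by push_cast; ring, zpow_natCast]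
        have hzp1 : ∀ j : ℤ, j ≠ (m:ℤ)+1 → ((q:ℝ):ℂ)^j ≠ a := by
          intro j hj
          rw [← hao]
          exact QINJ hq hj
        have hp1 : a ≠ 1 := by
          rw [← hao, show (1:ℂ) = ((q:ℝ):ℂ)^(0:ℤ) by rw [zpow_zero]]
          exact QINJ hq (by omega)
        have haa : a * a ≠ 1 := by
          rw [← hao, ← zpow_add₀ hq0C,
            show (1:ℂ) = ((q:ℝ):ℂ)^(0:ℤ) by rw [zpow_zero]]
          exact QINJ hq (by omega)
        have hdel : ∀ n : ℕ, ¬ n = m → ((q:ℝ):ℂ)^(n+1) ≠ a ∧ (((q:ℝ):ℂ)^(n+1))⁻¹ ≠ a := by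
          intro n hn
          constructor
          · rw [← zpow_natCast]
            exact hzp1 _ (by push_cast; omega)
          · rw [← zpow_natCast, ← zpow_neg]
            exact hzp1 _ (by push_cast; omega)
        have hT' := TPRIME hq m a ha0 hdel
        obtain ⟨ε, hε0, hε⟩ := ISOL hq a ha0 {j : ℤ | j ≠ (m:ℤ)+1} (fun j hj => hzp1 j hj)
        refine ⟨fun z => ((-2*a)*(1-z^2)/(1-a*z)
            + (z - a) * ((1+z)/(1-z) + ∑' n, if n = m then 0 else pF q n z)), ?_, ?_, ?_⟩
        · have h1a : AnalyticAt ℂ (fun z : ℂ => (-2*a)*(1-z^2)/(1-a*z)) a := by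
            apply AnalyticAt.div
            · exact analyticAt_const.mul (analyticAt_const.sub (analyticAt_id.pow 2))
            · exact analyticAt_const.sub (analyticAt_const.mul analyticAt_id)
            · exact fun hc => haa (by linear_combination -hc)
          exact h1a.add ((analyticAt_id.sub analyticAt_const).mul ((TERM0 a hp1).add hT'))
        · have h1 : (1:ℂ) - a*a ≠ 0 := fun hc => haa (by linear_combination -hc)
          have hval : (-2*a)*(1-a^2)/(1-a*a) = -2*a := by
            rw [show (1:ℂ)-a^2 = 1-a*a by ring, mul_div_assoc, div_self h1, mul_one]
          have hgo : (-2*a)*(1-a^2)/(1-a*a)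
              + (a - a) * ((1+a)/(1-a) + ∑' n, if n = m then 0 else pF q n a) ≠ 0 := by
            rw [sub_self, zero_mul, add_zero, hval]
            exact mul_ne_zero (by norm_num) ha0
          exact hgo
        · have hδ0 : 0 < min (ε/2) (‖a‖/2) := lt_min (half_pos hε0) (half_pos hna)
          filter_upwards [self_mem_nhdsWithin,
            nhdsWithin_le_nhds (Metric.ball_mem_nhds a hδ0)] with z hzne hzball
          have hznea : z ≠ a := hzne
          have hdist : ‖z - a‖ < min (ε/2) (‖a‖/2) := by
            rw [← dist_eq_norm]; exact Metric.mem_ball.mp hzball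
          have hz0 : z ≠ 0 := by
            intro hc
            rw [hc] at hdist
            have h1 : ‖(0:ℂ) - a‖ = ‖a‖ := by simp
            have h2 := min_le_right (ε/2) (‖a‖/2)
            rw [h1] at hdist
            linarith
          have hznp : ∀ j : ℤ, ((q:ℝ):ℂ)^j ≠ z := by
            intro j
            by_cases hj : j = (m:ℤ)+1
            · rw [hj, hao]
              exact fun hc => hznea hc.symm
            · intro hc
              have h1 := hε j hj
              rw [hc] at h1
              have h2 : ‖z - a‖ = ‖z - a‖ := rfl
              have h3 := min_le_left (ε/2) (‖a‖/2)
              linarith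
          have hSm := SUMM hq z hz0 hznp
          have hsplit : (∑' n, pF q n z)
              = pF q m z + ∑' n, if n = m then 0 else pF q n z :=
            Summable.tsum_eq_add_tsum_ite' m (hSm.update m 0)
          have hza : z - a ≠ 0 := sub_ne_zero.mpr hznea
          have hsubz : a - z ≠ 0 := sub_ne_zero.mpr (fun hc => hznea hc.symm)
          have h1z : (1:ℂ) - z ≠ 0 := by
            have := hznp 0
            rw [zpow_zero] at this
            exact sub_ne_zero.mpr this
          have haz : (1:ℂ) - a*z ≠ 0 := by
            intro hc
            have hc' : a * z = 1 := by linear_combination -hc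
            apply hznp (-((m:ℤ)+1))
            rw [zpow_neg, hao]
            exact inv_eq_of_mul_eq_one_right hc'
          show (1+z)/(1-z) + (∑' n, pF q n z)
              = ((-2*a)*(1-z^2)/(1-a*z)
                + (z - a) * ((1+z)/(1-z) + ∑' n, if n = m then 0 else pF q n z)) / (z - a)
          rw [hsplit]
          simp only [pF]
          rw [← hadef]
          field_simp
          ring

    · -- k = -(m+1)
      rw [show (Int.negSucc m) = -((m+1:ℕ):ℤ) from rfl, zpow_neg, zpow_natCast]
      set a : ℂ := ((q:ℝ):ℂ)^(m+1:ℕ) with hadef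
      have ha0 : a ≠ 0 := pow_ne_zero _ hq0C
      have hp0 : a⁻¹ ≠ 0 := inv_ne_zero ha0
      have hnp : 0 < ‖a⁻¹‖ := norm_pos_iff.mpr hp0
      have hao : ((q:ℝ):ℂ)^((m:ℤ)+1) = a := by
        rw [hadef, show ((m:ℤ)+1) = ((m+1:ℕ):ℤ) by push_cast; ring, zpow_natCast]
      have hpo : ((q:ℝ):ℂ)^(-((m:ℤ)+1)) = a⁻¹ := by rw [zpow_neg, hao]
      have hzp1 : ∀ j : ℤ, j ≠ -((m:ℤ)+1) → ((q:ℝ):ℂ)^j ≠ a⁻¹ := by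
        intro j hj
        rw [← hpo]
        exact QINJ hq hj
      have hp1 : a⁻¹ ≠ 1 := by
        rw [← hpo, show (1:ℂ) = ((q:ℝ):ℂ)^(0:ℤ) by rw [zpow_zero]]
        exact QINJ hq (by omega)
      have hpp : a⁻¹ * a⁻¹ ≠ 1 := by
        rw [← hpo, ← zpow_add₀ hq0C,
          show (1:ℂ) = ((q:ℝ):ℂ)^(0:ℤ) by rw [zpow_zero]]
        exact QINJ hq (by omega)
      have hap : a - a⁻¹ ≠ 0 := by
        apply sub_ne_zero.mpr
        rw [← hpo, ← hao]
        exact QINJ hq (by omega)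
      have hdel : ∀ n : ℕ, ¬ n = m → ((q:ℝ):ℂ)^(n+1) ≠ a⁻¹ ∧ (((q:ℝ):ℂ)^(n+1))⁻¹ ≠ a⁻¹ := by
        intro n hn
        constructor
        · rw [← zpow_natCast]
          exact hzp1 _ (by push_cast; omega)
        · rw [← zpow_natCast, ← zpow_neg]
          exact hzp1 _ (by push_cast; omega)
      have hT' := TPRIME hq m (a⁻¹) hp0 hdel
      obtain ⟨ε, hε0, hε⟩ := ISOL hq (a⁻¹) hp0 {j : ℤ | j ≠ -((m:ℤ)+1)} (fun j hj => hzp1 j hj)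
      refine ⟨fun z => ((-2)*(1-z^2)/(a - z)
          + (z - a⁻¹) * ((1+z)/(1-z) + ∑' n, if n = m then 0 else pF q n z)), ?_, ?_, ?_⟩
      · have h1a : AnalyticAt ℂ (fun z : ℂ => (-2)*(1-z^2)/(a - z)) a⁻¹ := by
          apply AnalyticAt.div
          · exact analyticAt_const.mul (analyticAt_const.sub (analyticAt_id.pow 2))
          · exact analyticAt_const.sub analyticAt_id
          · exact hap
        exact h1a.add ((analyticAt_id.sub analyticAt_const).mul ((TERM0 _ hp1).add hT'))
      · have hgo : (-2)*(1-(a⁻¹)^2)/(a - a⁻¹)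
            + (a⁻¹ - a⁻¹) * ((1+a⁻¹)/(1-a⁻¹) + ∑' n, if n = m then 0 else pF q n a⁻¹) ≠ 0 := by
          rw [sub_self, zero_mul, add_zero]
          exact div_ne_zero
            (mul_ne_zero (by norm_num) (fun hc => hpp (by linear_combination -hc))) hap
        exact hgo
      · have hδ0 : 0 < min (ε/2) (‖a⁻¹‖/2) := lt_min (half_pos hε0) (half_pos hnp)
        filter_upwards [self_mem_nhdsWithin,
          nhdsWithin_le_nhds (Metric.ball_mem_nhds (a⁻¹) hδ0)] with z hzne hzball
        have hznea : z ≠ a⁻¹ := hzne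
        have hdist : ‖z - a⁻¹‖ < min (ε/2) (‖a⁻¹‖/2) := by
          rw [← dist_eq_norm]; exact Metric.mem_ball.mp hzball
        have hz0 : z ≠ 0 := by
          intro hc
          rw [hc] at hdist
          have h1 : ‖(0:ℂ) - a⁻¹‖ = ‖a⁻¹‖ := by simp
          have h2 := min_le_right (ε/2) (‖a⁻¹‖/2)
          rw [h1] at hdist
          linarith
        have hznp : ∀ j : ℤ, ((q:ℝ):ℂ)^j ≠ z := by
          intro j
          by_cases hj : j = -((m:ℤ)+1)
          · rw [hj, hpo]
            exact fun hc => hznea hc.symm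
          · intro hc
            have h1 := hε j hj
            rw [hc] at h1
            have h3 := min_le_left (ε/2) (‖a⁻¹‖/2)
            linarith
        have hSm := SUMM hq z hz0 hznp
        have hsplit : (∑' n, pF q n z)
            = pF q m z + ∑' n, if n = m then 0 else pF q n z :=
          Summable.tsum_eq_add_tsum_ite' m (hSm.update m 0)
        have hza : z - a⁻¹ ≠ 0 := sub_ne_zero.mpr hznea
        have hsubz : a - z ≠ 0 := by
          apply sub_ne_zero.mpr
          intro hc
          exact hznp ((m:ℤ)+1) (by rw [hao, hc])
        have h1z : (1:ℂ) - z ≠ 0 := by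
          have := hznp 0
          rw [zpow_zero] at this
          exact sub_ne_zero.mpr this
        have haz : (1:ℂ) - a*z ≠ 0 := by
          intro hc
          have hc' : a * z = 1 := by linear_combination -hc
          exact hznea (inv_eq_of_mul_eq_one_right hc').symm
        show (1+z)/(1-z) + (∑' n, pF q n z)
            = ((-2)*(1-z^2)/(a - z)
              + (z - a⁻¹) * ((1+z)/(1-z) + ∑' n, if n = m then 0 else pF q n z)) / (z - a⁻¹)
        rw [hsplit]
        generalize (∑' n, if n = m then 0 else pF q n z) = T
        simp only [pF]
        rw [← hadef, eq_div_iff hza]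
        have haz2 : (1:ℂ) - z*a ≠ 0 := by rwa [mul_comm]
        field_simp
        ring
end

section
/- For every r > 0 and every z with |z| = e^{-r}, the real part of S_r(z) equals 1. -/
open Complex Filter Topology

noncomputable def aaux (r : ℝ) (k : ℤ) : ℂ := ((Real.exp (2 * k * r) : ℝ) : ℂ)

noncomputable def faux (r : ℝ) (z : ℂ) (k : ℤ) : ℂ := (aaux r k + z) / (aaux r k - z)

lemma aaux_ne (r : ℝ) (k : ℤ) : aaux r k ≠ 0 := by
  simp [aaux, Real.exp_ne_zero]

lemma hterm (r : ℝ) (k : ℤ) :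
    Complex.exp (2 * (k : ℂ) * (r : ℂ)) = aaux r k := by
  unfold aaux
  rw [Complex.ofReal_exp]
  congr 1
  push_cast
  ring

lemma annulusSum_eq (r : ℝ) (z : ℂ) (N : ℕ) :
    annulusSum r z N = ∑ k ∈ Finset.Icc (-(N : ℤ)) (N : ℤ), faux r z k := by
  unfold annulusSum faux
  refine Finset.sum_congr rfl fun k _ => ?_
  rw [hterm]

lemma den_ne (r : ℝ) (hr : 0 < r) (z : ℂ) (hz : ‖z‖ = Real.exp (-r)) (k : ℤ) :
    aaux r k - z ≠ 0 := by
  intro h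
  have h' : aaux r k = z := sub_eq_zero.mp h
  have habs : Real.exp (2 * k * r) = Real.exp (-r) := by
    have h1 := congrArg norm h'
    rw [hz] at h1
    rw [← h1, aaux, Complex.norm_real, Real.norm_eq_abs, abs_of_pos (Real.exp_pos _)]
  have h2 : 2 * (k : ℝ) * r = -r := Real.exp_injective habs
  have : (2 * k + 1 : ℝ) * r = 0 := by linarith
  rcases mul_eq_zero.mp this with h3 | h3
  · have : (2 * k + 1 : ℤ) = 0 := by exact_mod_cast h3
    omega
  · linarith

lemma den_conj_ne (r : ℝ) (hr : 0 < r) (z : ℂ) (hz : ‖z‖ = Real.exp (-r)) (k : ℤ) :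
    aaux r k - (starRingEnd ℂ) z ≠ 0 := by
  have : ‖(starRingEnd ℂ) z‖ = Real.exp (-r) := by
    rw [RCLike.norm_conj, hz]
  exact den_ne r hr ((starRingEnd ℂ) z) this k

lemma conj_faux (r : ℝ) (z : ℂ) (k : ℤ) :
    (starRingEnd ℂ) (faux r z k) =
      (aaux r k + (starRingEnd ℂ) z) / (aaux r k - (starRingEnd ℂ) z) := by
  rw [faux, map_div₀, map_add, map_sub, aaux, Complex.conj_ofReal]

lemma pair (r : ℝ) (hr : 0 < r) (z : ℂ) (hz : ‖z‖ = Real.exp (-r)) (k : ℤ) :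
    faux r z (-(k + 1)) = -((starRingEnd ℂ) (faux r z k)) := by
  have hmul : z * (starRingEnd ℂ) z = ((Real.exp (-(2 * r)) : ℝ) : ℂ) := by
    rw [Complex.mul_conj]
    norm_cast
    rw [Complex.normSq_eq_norm_sq, hz, sq, ← Real.exp_add]
    ring_nf
  have haa : aaux r (-(k + 1)) * aaux r k = ((Real.exp (-(2 * r)) : ℝ) : ℂ) := by
    unfold aaux
    rw [← Complex.ofReal_mul, ← Real.exp_add]
    congr 2
    push_cast
    ring
  rw [conj_faux, faux, neg_div', div_eq_div_iff (den_ne r hr z hz _) (den_conj_ne r hr z hz k)]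
  linear_combination (aaux r k - (starRingEnd ℂ) z + aaux r (-(k+1)) - z) * (0:ℂ) + ((starRingEnd ℂ) z - aaux r k) * 0 + 1 * haa - 1 * hmul + (haa - hmul)

lemma sum_eq (r : ℝ) (hr : 0 < r) (z : ℂ) (hz : ‖z‖ = Real.exp (-r)) (N : ℕ) :
    annulusSum r z N =
      faux r z N + ∑ n ∈ Finset.range N, (faux r z n - (starRingEnd ℂ) (faux r z n)) := by
  induction N with
  | zero => simp [annulusSum_eq]
  | succ N ih =>
    have hins : Finset.Icc (-((N:ℤ) + 1)) ((N:ℤ) + 1) =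
        insert (-((N:ℤ) + 1)) (insert ((N:ℤ) + 1) (Finset.Icc (-(N:ℤ)) (N:ℤ))) := by
      ext x
      simp only [Finset.mem_Icc, Finset.mem_insert]
      omega
    rw [annulusSum_eq]
    push_cast
    rw [hins, Finset.sum_insert (by simp only [Finset.mem_insert, Finset.mem_Icc]; omega),
      Finset.sum_insert (by simp only [Finset.mem_Icc]; omega), ← annulusSum_eq, ih,
      Finset.sum_range_succ]
    have hp := pair r hr z hz (N : ℤ)
    push_cast at hp ⊢
    rw [hp]
    push_cast
    ring

lemma faux_split (r : ℝ) (hr : 0 < r) (z : ℂ) (hz : ‖z‖ = Real.exp (-r)) (k : ℤ) :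
    faux r z k = 1 + 2 * z / (aaux r k - z) := by
  rw [faux]
  field_simp [den_ne r hr z hz k]
  ring

lemma aaux_mul_pow (r : ℝ) (n : ℕ) :
    aaux r n * (((Real.exp (-(2 * r)) : ℝ) : ℂ)) ^ n = 1 := by
  unfold aaux
  rw [← Complex.ofReal_pow, ← Real.exp_nat_mul, ← Complex.ofReal_mul, ← Real.exp_add]
  have h : 2 * ((n : ℤ) : ℝ) * r + (n : ℝ) * (-(2 * r)) = 0 := by push_cast; ring
  rw [h, Real.exp_zero, Complex.ofReal_one]

lemma faux_tendsto (r : ℝ) (hr : 0 < r) (z : ℂ) (hz : ‖z‖ = Real.exp (-r)) :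
    Tendsto (fun N : ℕ => faux r z N) atTop (𝓝 1) := by
  set c : ℂ := ((Real.exp (-(2 * r)) : ℝ) : ℂ) with hc
  have hclt : ‖c‖ < 1 := by
    rw [hc, Complex.norm_real, Real.norm_of_nonneg (Real.exp_pos _).le]
    exact Real.exp_lt_one_iff.mpr (by linarith)
  have hzc : Tendsto (fun N : ℕ => z * c ^ N) atTop (𝓝 0) := by
    have := tendsto_pow_atTop_nhds_zero_of_norm_lt_one hclt
    simpa using this.const_mul z
  have key : ∀ N : ℕ, faux r z N = (1 + z * c ^ N) / (1 - z * c ^ N) := by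
    intro N
    have h1 := aaux_mul_pow r N
    rw [faux, show aaux r (N : ℤ) + z = aaux r (N : ℤ) * (1 + z * c ^ N) by
        linear_combination -z * h1,
      show aaux r (N : ℤ) - z = aaux r (N : ℤ) * (1 - z * c ^ N) by
        linear_combination z * h1,
      mul_div_mul_left _ _ (aaux_ne r _)]
  have := Tendsto.div ((tendsto_const_nhds (x := (1 : ℂ)) (f := atTop)).add hzc)
    ((tendsto_const_nhds (x := (1 : ℂ)) (f := atTop)).sub hzc) (by norm_num)
  simp only [add_zero, sub_zero, div_one] at this
  exact this.congr fun N => (key N).symm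

lemma gnorm_bound (r : ℝ) (hr : 0 < r) (z : ℂ) (hz : ‖z‖ = Real.exp (-r)) (n : ℕ) :
    ‖faux r z n - (starRingEnd ℂ) (faux r z n)‖ ≤
      (4 * Real.exp (-r) / (1 - Real.exp (-r))) * (Real.exp (-(2 * r))) ^ n := by
  have hden := den_ne r hr z hz n
  have hdenc := den_conj_ne r hr z hz n
  have hsplit : faux r z n - (starRingEnd ℂ) (faux r z n)
      = 2 * z / (aaux r n - z)
        - 2 * ((starRingEnd ℂ) z) / (aaux r n - (starRingEnd ℂ) z) := by
    rw [conj_faux, faux]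
    field_simp
    ring
  have hr1 : Real.exp (-r) < 1 := Real.exp_lt_one_iff.mpr (by linarith)
  have hE1 : (1 : ℝ) ≤ Real.exp (2 * (n : ℝ) * r) := Real.one_le_exp (by positivity)
  have hnorm_a : ‖(aaux r (n : ℤ))‖ = Real.exp (2 * (n : ℝ) * r) := by
    rw [aaux, Complex.norm_real, Real.norm_of_nonneg (Real.exp_pos _).le]
    norm_cast
  have hnz : ‖z‖ = Real.exp (-r) := by rw [hz]
  have hnzc : ‖(starRingEnd ℂ) z‖ = Real.exp (-r) := by
    rw [RCLike.norm_conj, hnz]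
  have h1 : Real.exp (2 * (n : ℝ) * r) * (1 - Real.exp (-r)) ≤ ‖aaux r (n : ℤ) - z‖ := by
    have := norm_sub_norm_le (aaux r (n : ℤ)) z
    have h2 : Real.exp (2 * (n : ℝ) * r) * Real.exp (-r) ≥ Real.exp (-r) := by
      nlinarith [Real.exp_pos (-r)]
    nlinarith [norm_sub_norm_le (aaux r (n : ℤ)) z, hnorm_a, hnz]
  have h1c : Real.exp (2 * (n : ℝ) * r) * (1 - Real.exp (-r))
      ≤ ‖aaux r (n : ℤ) - (starRingEnd ℂ) z‖ := by
    have h2 : Real.exp (2 * (n : ℝ) * r) * Real.exp (-r) ≥ Real.exp (-r) := by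
      nlinarith [Real.exp_pos (-r)]
    nlinarith [norm_sub_norm_le (aaux r (n : ℤ)) ((starRingEnd ℂ) z), hnorm_a, hnzc]
  have hposden : 0 < Real.exp (2 * (n : ℝ) * r) * (1 - Real.exp (-r)) := by
    apply mul_pos (Real.exp_pos _)
    linarith
  calc ‖faux r z n - (starRingEnd ℂ) (faux r z n)‖
      ≤ ‖2 * z / (aaux r n - z)‖
        + ‖2 * ((starRingEnd ℂ) z) / (aaux r n - (starRingEnd ℂ) z)‖ := by
        rw [hsplit]; exact norm_sub_le _ _
    _ = 2 * Real.exp (-r) / ‖aaux r (n : ℤ) - z‖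
        + 2 * Real.exp (-r) / ‖aaux r (n : ℤ) - (starRingEnd ℂ) z‖ := by
        rw [norm_div, norm_div, norm_mul, norm_mul, hnz, hnzc]
        norm_num
    _ ≤ 2 * Real.exp (-r) / (Real.exp (2 * (n : ℝ) * r) * (1 - Real.exp (-r)))
        + 2 * Real.exp (-r) / (Real.exp (2 * (n : ℝ) * r) * (1 - Real.exp (-r))) := by
        gcongr <;> positivity
    _ = (4 * Real.exp (-r) / (1 - Real.exp (-r))) * (Real.exp (-(2 * r))) ^ n := by
        have hE : Real.exp (-(2 * r)) ^ n = (Real.exp (2 * (n : ℝ) * r))⁻¹ := by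
          rw [← Real.exp_nat_mul, ← Real.exp_neg]
          ring_nf
        rw [hE]
        have hne2 : (1 : ℝ) - Real.exp (-r) ≠ 0 := by linarith
        field_simp
        ring

/-- For every `r > 0` and every `z` with `|z| = e^{-r}`, `Re S_r(z) = 1`. -/
theorem stmt1 (r : ℝ) (hr : 0 < r) (z : ℂ) (hz : ‖z‖ = Real.exp (-r)) :
    ∃ S : ℂ, Tendsto (fun N => annulusSum r z N) atTop (𝓝 S) ∧ S.re = 1 := by
  set g : ℕ → ℂ := fun n => faux r z n - (starRingEnd ℂ) (faux r z n) with hg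
  have hsummable : Summable g := by
    apply Summable.of_norm_bounded ?_ (fun n => gnorm_bound r hr z hz n)
    exact (summable_geometric_of_lt_one (Real.exp_pos _).le
      (Real.exp_lt_one_iff.mpr (by linarith))).mul_left _
  have hpart : Tendsto (fun N => ∑ n ∈ Finset.range N, g n) atTop (𝓝 (∑' n, g n)) :=
    hsummable.hasSum.tendsto_sum_nat
  refine ⟨1 + ∑' n, g n, ?_, ?_⟩
  · have h := (faux_tendsto r hr z hz).add hpart
    exact h.congr fun N => (sum_eq r hr z hz N).symm
  · rw [Complex.add_re, Complex.one_re, Complex.re_tsum hsummable]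
    have hre : ∀ n, (g n).re = 0 := fun n => by
      simp [hg, Complex.sub_re, Complex.conj_re]
    simp [hre]
end

section
/- For every r > 0 and every z with |z| = 1 and z ≠ 1, the real part of S_r(z) equals 0. -/
open Complex Filter Topology

lemma annulus_alg (a z w : ℂ) (ha : a ≠ 0) (hzw : z * w = 1)
    (h1 : a - z ≠ 0) (h2 : a - w ≠ 0) (h3 : 1 - a*z ≠ 0) (h4 : 1 - a*w ≠ 0) :
    ((a+z)/(a-z) + (a+w)/(a-w)) + ((a⁻¹+z)/(a⁻¹-z) + (a⁻¹+w)/(a⁻¹-w)) = 0 := by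
  have h3' : a⁻¹ - z ≠ 0 := by
    have hh : a⁻¹ - z = (1 - a*z)/a := by field_simp
    rw [hh]; exact div_ne_zero h3 ha
  have h4' : a⁻¹ - w ≠ 0 := by
    have hh : a⁻¹ - w = (1 - a*w)/a := by field_simp
    rw [hh]; exact div_ne_zero h4 ha
  have e1 : (a⁻¹+z)/(a⁻¹-z) = (1+a*z)/(1-a*z) := by
    have h5 : a * (a⁻¹ + z) = 1 + a*z := by rw [mul_add, mul_inv_cancel₀ ha]
    have h6 : a * (a⁻¹ - z) = 1 - a*z := by rw [mul_sub, mul_inv_cancel₀ ha]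
    rw [← h5, ← h6, mul_div_mul_left _ _ ha]
  have e2 : (a⁻¹+w)/(a⁻¹-w) = (1+a*w)/(1-a*w) := by
    have h5 : a * (a⁻¹ + w) = 1 + a*w := by rw [mul_add, mul_inv_cancel₀ ha]
    have h6 : a * (a⁻¹ - w) = 1 - a*w := by rw [mul_sub, mul_inv_cancel₀ ha]
    rw [← h5, ← h6, mul_div_mul_left _ _ ha]
  rw [e1, e2]
  field_simp
  linear_combination (2*a^3*w + 2*a*w + 2*a^3*z + 2*a*z - 4*a^2*z*w - 4*a^2) * hzw

/-- For every `r > 0` and every `z` with `|z| = 1`, `z ≠ 1`, `Re S_r(z) = 0`. -/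
theorem stmt2 (r : ℝ) (hr : 0 < r) (z : ℂ) (hz : ‖z‖ = 1) (hz1 : z ≠ 1) :
    ∃ S : ℂ, Tendsto (fun N => annulusSum r z N) atTop (𝓝 S) ∧ S.re = 0 := by
  set w : ℂ := (starRingEnd ℂ) z with hw
  have hzw : z * w = 1 := by
    rw [hw, Complex.mul_conj]
    norm_cast
    rw [Complex.normSq_eq_norm_sq, hz]; norm_num
  have hz0 : z ≠ 0 := by
    intro h; rw [h] at hz; simp at hz
  set e : ℤ → ℂ := fun k => Complex.exp (2 * (k : ℂ) * (r : ℂ)) with he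
  have he_real : ∀ k : ℤ, e k = ((Real.exp (2 * k * r) : ℝ) : ℂ) := by
    intro k
    rw [he]
    simp only
    rw [Complex.ofReal_exp]
    norm_cast
  have habs : ∀ k : ℤ, ‖e k‖ = Real.exp (2 * k * r) := by
    intro k; rw [he_real k, Complex.norm_of_nonneg (Real.exp_pos _).le]
  have hne0 : ∀ k : ℤ, e k ≠ 0 := fun k => Complex.exp_ne_zero _
  have hconj : ∀ k : ℤ, (starRingEnd ℂ) (e k) = e k := by
    intro k; rw [he_real k, Complex.conj_ofReal]
  have hsubz : ∀ k : ℤ, e k - z ≠ 0 := by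
    intro k h
    have hk : e k = z := sub_eq_zero.mp h
    have h1 : Real.exp (2 * k * r) = 1 := by rw [← habs k, hk, hz]
    have h2 : (2 * (k:ℝ) * r) = 0 := by
      have := Real.exp_eq_exp.mp (by rw [h1, Real.exp_zero] : Real.exp (2*k*r) = Real.exp 0)
      exact this
    have h3 : (k : ℝ) = 0 := by
      rcases mul_eq_zero.mp h2 with h | h
      · rcases mul_eq_zero.mp h with h | h
        · norm_num at h
        · exact h
      · exact absurd h hr.ne'
    have hk0 : k = 0 := by exact_mod_cast h3
    apply hz1
    rw [← hk, hk0]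
    simp [he]
  have hsubw : ∀ k : ℤ, e k - w ≠ 0 := by
    intro k h
    have : (starRingEnd ℂ) (e k - z) = 0 := by
      rw [map_sub, hconj k, ← hw, h]
    exact hsubz k (by simpa using congrArg (starRingEnd ℂ) this)
  have h1mz : ∀ k : ℤ, 1 - e k * z ≠ 0 := by
    intro k h
    have : 1 - e k * z = -z * (e k - w) := by
      linear_combination -hzw
    rw [this] at h
    rcases mul_eq_zero.mp h with h | h
    · exact hz0 (neg_eq_zero.mp h)
    · exact hsubw k h
  have h1mw : ∀ k : ℤ, 1 - e k * w ≠ 0 := by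
    intro k h
    have hwne : w ≠ 0 := by
      intro hw0; rw [hw0, mul_zero] at hzw; exact one_ne_zero hzw.symm
    have : 1 - e k * w = -w * (e k - z) := by
      linear_combination -hzw
    rw [this] at h
    rcases mul_eq_zero.mp h with h | h
    · exact hwne (neg_eq_zero.mp h)
    · exact hsubz k h
  have heneg : ∀ k : ℤ, e (-k) = (e k)⁻¹ := by
    intro k
    rw [he]
    simp only
    rw [← Complex.exp_neg]
    congr 1
    push_cast
    ring
  set t : ℤ → ℂ := fun k => (e k + z) / (e k - z) with ht
  have hAs : ∀ N : ℕ, annulusSum r z N = ∑ k ∈ Finset.Icc (-(N:ℤ)) (N:ℤ), t k := by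
    intro N; rfl
  -- key algebraic identity
  have key : ∀ k : ℤ, (t k + (starRingEnd ℂ) (t k)) + (t (-k) + (starRingEnd ℂ) (t (-k))) = 0 := by
    intro k
    have hconjt : ∀ m : ℤ, (starRingEnd ℂ) (t m) = (e m + w) / (e m - w) := by
      intro m
      rw [ht]
      simp only [map_div₀, map_add, map_sub, hconj m, hw]
    rw [hconjt, hconjt, ht]
    simp only
    rw [heneg k]
    exact annulus_alg (e k) z w (hne0 k) hzw (hsubz k) (hsubw k) (h1mz k) (h1mw k)
  have key0 : t 0 + (starRingEnd ℂ) (t 0) = 0 := by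
    have := key 0
    rw [neg_zero] at this
    exact add_self_eq_zero.mp (by linear_combination this)
  -- real part of each partial sum is zero
  have hre : ∀ N : ℕ, (annulusSum r z N).re = 0 := by
    intro N
    have h2re : annulusSum r z N + (starRingEnd ℂ) (annulusSum r z N) = 0 := by
      rw [hAs N, map_sum, ← Finset.sum_add_distrib]
      refine Finset.sum_involution (fun k _ => -k) (fun k _ => key k) (fun k hk hne => ?_)
        (fun k hk => ?_) (fun k hk => neg_neg k)
      · intro h
        have h' : -k = k := h
        have hk0 : k = 0 := by omega
        rw [hk0] at hne
        exact hne key0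
      · simp only [Finset.mem_Icc] at hk ⊢
        omega
    have h := Complex.add_conj (annulusSum r z N)
    rw [h2re] at h
    have h' : 2 * (annulusSum r z N).re = 0 := by exact_mod_cast h.symm
    linarith
  -- convergence
  set F : ℕ → ℂ := fun n => if n = 0 then t 0 else t n + t (-(n:ℤ)) with hF
  have hFs : ∀ N : ℕ, annulusSum r z N = ∑ n ∈ Finset.range (N+1), F n := by
    intro N
    induction N with
    | zero =>
      rw [hAs]
      norm_num [hF]
    | succ N ih =>
      rw [hAs] at ih ⊢
      have hset : Finset.Icc (-((N+1:ℕ):ℤ)) ((N+1:ℕ):ℤ) =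
          insert ((N+1:ℕ):ℤ) (insert (-((N+1:ℕ):ℤ)) (Finset.Icc (-(N:ℕ):ℤ) (N:ℕ))) := by
        ext x
        simp only [Finset.mem_Icc, Finset.mem_insert]
        push_cast
        omega
      rw [hset, Finset.sum_insert, Finset.sum_insert, ih]
      · have hFne : F (N+1) = t ((N+1:ℕ):ℤ) + t (-((N+1:ℕ):ℤ)) := by
          simp only [hF, Nat.succ_ne_zero, if_false]
        conv_rhs => rw [Finset.sum_range_succ]
        rw [hFne]
        ring
      · simp only [Finset.mem_Icc]; push_cast; omega
      · simp only [Finset.mem_insert, Finset.mem_Icc]; push_cast; omega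
  -- norm bound
  set C : ℝ := 4 / (Real.exp (2*r) - 1) with hC
  set ρ : ℝ := Real.exp (-(2*r)) with hρ
  have hexp1 : (1:ℝ) < Real.exp (2*r) := by
    rw [show (1:ℝ) = Real.exp 0 by simp]
    exact Real.exp_lt_exp.mpr (by linarith)
  have hρ1 : ρ < 1 := by
    rw [hρ, show (1:ℝ) = Real.exp 0 by simp]
    exact Real.exp_lt_exp.mpr (by linarith)
  have hρ0 : 0 ≤ ρ := (Real.exp_pos _).le
  have hbound : ∀ n : ℕ, ‖F (n+1)‖ ≤ C * ρ^n := by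
    intro n
    set k : ℤ := (n:ℤ) + 1 with hk
    have hFval : F (n+1) = t k + t (-k) := by
      simp only [hF, Nat.succ_ne_zero, if_false, hk]
      norm_cast
    set A : ℝ := Real.exp (2*k*r) with hA
    have hA1 : 1 < A := by
      rw [hA, show (1:ℝ) = Real.exp 0 by simp]
      apply Real.exp_lt_exp.mpr
      have : (1:ℝ) ≤ (k:ℝ) := by exact_mod_cast (by omega : (1:ℤ) ≤ k)
      nlinarith
    have hnz : ‖z‖ = 1 := hz
    -- t k - 1 = 2z/(e k - z)
    have ht1 : t k - 1 = 2*z / (e k - z) := by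
      show (e k + z) / (e k - z) - 1 = 2*z / (e k - z)
      rw [div_sub_one (hsubz k)]
      congr 1
      ring
    have ht2 : t (-k) + 1 = 2 * e (-k) / (e (-k) - z) := by
      show (e (-k) + z) / (e (-k) - z) + 1 = 2 * e (-k) / (e (-k) - z)
      rw [div_add_one (hsubz (-k))]
      congr 1
      ring
    have habsek : ‖e k‖ = A := by rw [habs k, hA]
    have habsenk : ‖e (-k)‖ = A⁻¹ := by
      rw [habs (-k), hA, ← Real.exp_neg]
      congr 1
      push_cast
      ring
    have hden1 : A - 1 ≤ ‖e k - z‖ := by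
      calc A - 1 = ‖e k‖ - ‖z‖ := by rw [habsek, hnz]
        _ ≤ ‖e k - z‖ := norm_sub_norm_le _ _
    have hden2 : 1 - A⁻¹ ≤ ‖e (-k) - z‖ := by
      calc 1 - A⁻¹ = ‖z‖ - ‖e (-k)‖ := by rw [habsenk, hnz]
        _ ≤ ‖z - e (-k)‖ := norm_sub_norm_le _ _
        _ = ‖e (-k) - z‖ := norm_sub_rev _ _
    have hA1' : (0:ℝ) < A - 1 := by linarith
    have hAinv : A⁻¹ < 1 := by
      rw [inv_lt_one_iff₀]; right; exact hA1
    have hb1 : ‖t k - 1‖ ≤ 2 / (A - 1) := by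
      rw [ht1, norm_div, norm_mul]
      simp only [Complex.norm_ofNat, hnz, mul_one]
      apply div_le_div_of_nonneg_left (by norm_num) hA1' hden1
    have hb2 : ‖t (-k) + 1‖ ≤ 2 / (A - 1) := by
      rw [ht2, norm_div, norm_mul]
      simp only [Complex.norm_ofNat, habsenk]
      have h2 : (0:ℝ) < 1 - A⁻¹ := by linarith
      calc 2 * A⁻¹ / ‖e (-k) - z‖ ≤ 2 * A⁻¹ / (1 - A⁻¹) :=
            div_le_div_of_nonneg_left (by positivity) h2 hden2
        _ = 2 / (A - 1) := by
            rw [div_eq_div_iff h2.ne' hA1'.ne']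
            field_simp
        _ ≤ 2 / (A - 1) := le_refl _
    have hsum : ‖F (n+1)‖ ≤ 4 / (A - 1) := by
      calc ‖F (n+1)‖ = ‖(t k - 1) + (t (-k) + 1)‖ := by rw [hFval]; ring_nf
        _ ≤ ‖t k - 1‖ + ‖t (-k) + 1‖ := norm_add_le _ _
        _ ≤ 2/(A-1) + 2/(A-1) := add_le_add hb1 hb2
        _ = 4/(A-1) := by ring
    refine hsum.trans ?_
    have hgeom : Real.exp (2*n*r) * (Real.exp (2*r) - 1) ≤ A - 1 := by
      have : Real.exp (2*n*r) * Real.exp (2*r) = A := by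
        rw [hA, ← Real.exp_add]
        congr 1
        push_cast [hk]
        ring
      have h1 : (1:ℝ) ≤ Real.exp (2*n*r) := by
        rw [show (1:ℝ) = Real.exp 0 by simp]
        apply Real.exp_le_exp.mpr
        positivity
      nlinarith
    have hE : (0:ℝ) < Real.exp (2*n*r) := Real.exp_pos _
    have hD : (0:ℝ) < Real.exp (2*r) - 1 := by linarith
    have hCρ : C * ρ^n = 4 / (Real.exp (2*n*r) * (Real.exp (2*r) - 1)) := by
      rw [hC, hρ, ← Real.exp_nat_mul, show (n:ℝ) * -(2*r) = -(2*n*r) by ring,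
        Real.exp_neg]
      field_simp
    rw [hCρ]
    exact div_le_div_of_nonneg_left (by norm_num) (by positivity) hgeom
  have hsummable : Summable F := by
    rw [← summable_nat_add_iff 1]
    apply Summable.of_norm_bounded (g := fun n => C * ρ^n) ?_ hbound
    exact (summable_geometric_of_lt_one hρ0 hρ1).mul_left C
  obtain ⟨S, hS⟩ := hsummable
  refine ⟨S, ?_, ?_⟩
  · have h1 : Tendsto (fun N => ∑ n ∈ Finset.range N, F n) atTop (𝓝 S) :=
      hS.tendsto_sum_nat
    have h2 : Tendsto (fun N : ℕ => N + 1) atTop atTop := tendsto_add_atTop_nat 1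
    have h3 := h1.comp h2
    simpa only [Function.comp_def, ← hFs] using h3
  · have h1 : Tendsto (fun N => annulusSum r z N) atTop (𝓝 S) := by
      have h1 : Tendsto (fun N => ∑ n ∈ Finset.range N, F n) atTop (𝓝 S) :=
        hS.tendsto_sum_nat
      have h2 : Tendsto (fun N : ℕ => N + 1) atTop atTop := tendsto_add_atTop_nat 1
      have h3 := h1.comp h2
      simpa only [Function.comp_def, ← hFs] using h3
    have h2 : Tendsto (fun N => (annulusSum r z N).re) atTop (𝓝 S.re) :=
      (Complex.continuous_re.continuousAt.tendsto).comp h1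
    have h3 : Tendsto (fun _ : ℕ => (0:ℝ)) atTop (𝓝 S.re) := by
      convert h2 using 1
      ext N
      exact (hre N).symm
    exact tendsto_nhds_unique h3 tendsto_const_nhds
end

section
/- For every r > 0, the real part of S_r is strictly positive on the annulus A_r = {z : e^{-r} < |z| < 1}. -/
open Complex Filter Topology

namespace Stmt3Aux

/-- single term -/
noncomputable def f (r : ℝ) (k : ℤ) (z : ℂ) : ℂ :=
  (Complex.exp (2 * (k : ℂ) * (r : ℂ)) + z) / (Complex.exp (2 * (k : ℂ) * (r : ℂ)) - z)

/-- paired terms k+1 and -(k+1) -/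
noncomputable def pr (r : ℝ) (k : ℕ) (z : ℂ) : ℂ :=
  f r (k + 1) z + f r (-(k + 1)) z

/-- the sum of the pair series -/
noncomputable def T (r : ℝ) (z : ℂ) : ℂ := ∑' k : ℕ, pr r k z

/-- the limit function -/
noncomputable def Sf (r : ℝ) (z : ℂ) : ℂ := f r 0 z + T r z

/-- geometric-type constant -/
noncomputable def C0 (r : ℝ) : ℝ :=
  4 / ((1 - Real.exp (-(2 * r))) * (Real.exp (-r) - Real.exp (-(2 * r))))

lemma exp_int (r : ℝ) (k : ℤ) :
    Complex.exp (2 * (k : ℂ) * (r : ℂ)) = ((Real.exp (2 * (k : ℝ) * r) : ℝ) : ℂ) := by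
  rw [Complex.ofReal_exp]; congr 1; push_cast; ring

lemma f_eq (r : ℝ) (k : ℤ) (z : ℂ) :
    f r k z = (((Real.exp (2 * (k : ℝ) * r) : ℝ) : ℂ) + z) /
      (((Real.exp (2 * (k : ℝ) * r) : ℝ) : ℂ) - z) := by
  rw [f, exp_int]

lemma re_div (a : ℝ) (z : ℂ) :
    (((a : ℂ) + z) / ((a : ℂ) - z)).re
      = (a ^ 2 - Complex.normSq z) / Complex.normSq ((a : ℂ) - z) := by
  rw [Complex.div_re, ← add_div]
  congr 1
  simp [Complex.normSq_apply]
  ring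

lemma nsq_sub (a : ℝ) (z : ℂ) :
    Complex.normSq ((a : ℂ) - z) = a ^ 2 - 2 * a * z.re + Complex.normSq z := by
  simp [Complex.normSq_apply]
  ring

lemma cancel_alg {a b x s : ℝ} (hs : s = a * b)
    (hP : a ^ 2 - 2 * a * x + s ≠ 0) (hQ : b ^ 2 - 2 * b * x + s ≠ 0) :
    (a ^ 2 - s) / (a ^ 2 - 2 * a * x + s) + (b ^ 2 - s) / (b ^ 2 - 2 * b * x + s) = 0 := by
  subst hs
  rw [div_add_div _ _ hP hQ, div_eq_zero_iff]; left
  ring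

lemma re_pair_zero {a b : ℝ} {z : ℂ} (hs : Complex.normSq z = a * b)
    (ha : ((a : ℂ) - z) ≠ 0) (hb : ((b : ℂ) - z) ≠ 0) :
    (((a : ℂ) + z) / ((a : ℂ) - z)).re + (((b : ℂ) + z) / ((b : ℂ) - z)).re = 0 := by
  have ha' : Complex.normSq ((a : ℂ) - z) ≠ 0 := by
    simpa [Complex.normSq_eq_zero] using ha
  have hb' : Complex.normSq ((b : ℂ) - z) ≠ 0 := by
    simpa [Complex.normSq_eq_zero] using hb
  rw [re_div, re_div, nsq_sub, nsq_sub, hs]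
  rw [nsq_sub, hs] at ha'
  rw [nsq_sub, hs] at hb'
  exact cancel_alg rfl ha' hb'

lemma pair_closed {a b : ℝ} {z : ℂ} (hab : a * b = 1)
    (ha : ((a : ℂ) - z) ≠ 0) (hb : ((b : ℂ) - z) ≠ 0) :
    ((a : ℂ) + z) / ((a : ℂ) - z) + ((b : ℂ) + z) / ((b : ℂ) - z)
      = 2 * (1 - z ^ 2) / (((a : ℂ) - z) * ((b : ℂ) - z)) := by
  have h : (a : ℂ) * (b : ℂ) = 1 := by
    rw [← Complex.ofReal_mul, hab, Complex.ofReal_one]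
  field_simp
  linear_combination (2 : ℂ) * h

lemma norm_coe (a : ℝ) (ha : 0 ≤ a) : ‖((a:ℝ):ℂ)‖ = a := by
  rw [Complex.norm_real, Real.norm_eq_abs, _root_.abs_of_nonneg ha]

lemma sub_ne {a : ℝ} {z : ℂ} (ha : 0 ≤ a) (h : ‖z‖ ≠ a) : (a:ℂ) - z ≠ 0 := by
  intro h0
  rw [sub_eq_zero] at h0
  rw [← h0, norm_coe a ha] at h
  exact h rfl

lemma lower1 (a : ℝ) (z : ℂ) (h : ‖z‖ ≤ 1) (h2 : 1 ≤ a) : a - 1 ≤ ‖(a:ℂ) - z‖ := by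
  have h3 := norm_sub_norm_le ((a:ℂ)) z
  rw [norm_coe a (by linarith)] at h3
  linarith

lemma lower2 (b : ℝ) (z : ℂ) (hb : 0 ≤ b) (h : b ≤ ‖z‖) : ‖z‖ - b ≤ ‖(b:ℂ) - z‖ := by
  have h3 := norm_sub_norm_le z ((b:ℂ))
  rw [norm_sub_rev, norm_coe b hb] at h3
  linarith

lemma pr_eq (r : ℝ) (k : ℕ) (z : ℂ)
    (ha : ((Real.exp (2 * ((k:ℝ) + 1) * r) : ℝ) : ℂ) - z ≠ 0)
    (hb : ((Real.exp (-(2 * ((k:ℝ) + 1) * r)) : ℝ) : ℂ) - z ≠ 0) :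
    pr r k z = 2 * (1 - z ^ 2) /
      ((((Real.exp (2 * ((k:ℝ) + 1) * r) : ℝ) : ℂ) - z) *
        (((Real.exp (-(2 * ((k:ℝ) + 1) * r)) : ℝ) : ℂ) - z)) := by
  have hab : Real.exp (2 * ((k:ℝ) + 1) * r) * Real.exp (-(2 * ((k:ℝ) + 1) * r)) = 1 := by
    rw [← Real.exp_add]; ring_nf; exact Real.exp_zero
  have e1 : f r ((k:ℤ) + 1) z = (((Real.exp (2 * ((k:ℝ) + 1) * r) : ℝ) : ℂ) + z) /
      (((Real.exp (2 * ((k:ℝ) + 1) * r) : ℝ) : ℂ) - z) := by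
    rw [f_eq]; norm_num
  have e2 : f r (-((k:ℤ) + 1)) z = (((Real.exp (-(2 * ((k:ℝ) + 1) * r)) : ℝ) : ℂ) + z) /
      (((Real.exp (-(2 * ((k:ℝ) + 1) * r)) : ℝ) : ℂ) - z) := by
    rw [f_eq]; push_cast; ring_nf
  rw [pr, e1, e2, pair_closed hab ha hb]

section WithR

variable {r : ℝ}

lemma hz_lt_a (hr : 0 < r) (k : ℕ) {z : ℂ} (h2 : ‖z‖ ≤ 1) :
    ‖z‖ < Real.exp (2 * ((k:ℝ) + 1) * r) := by
  have : (1:ℝ) < Real.exp (2 * ((k:ℝ) + 1) * r) := by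
    nlinarith [Real.add_one_le_exp (2 * ((k:ℝ) + 1) * r), Nat.cast_nonneg (α := ℝ) k]
  linarith

lemma b_lt_hz (hr : 0 < r) (k : ℕ) {z : ℂ} (h1 : Real.exp (-r) ≤ ‖z‖) :
    Real.exp (-(2 * ((k:ℝ) + 1) * r)) < ‖z‖ := by
  have h3 : Real.exp (-(2 * ((k:ℝ) + 1) * r)) < Real.exp (-r) := by
    apply Real.exp_lt_exp.2
    nlinarith [Nat.cast_nonneg (α := ℝ) k]
  linarith

lemma ha_ne (hr : 0 < r) (k : ℕ) {z : ℂ} (h2 : ‖z‖ ≤ 1) :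
    ((Real.exp (2 * ((k:ℝ) + 1) * r) : ℝ) : ℂ) - z ≠ 0 :=
  sub_ne (Real.exp_pos _).le (ne_of_lt (hz_lt_a hr k h2))

lemma hb_ne (hr : 0 < r) (k : ℕ) {z : ℂ} (h1 : Real.exp (-r) ≤ ‖z‖) :
    ((Real.exp (-(2 * ((k:ℝ) + 1) * r)) : ℝ) : ℂ) - z ≠ 0 :=
  sub_ne (Real.exp_pos _).le (ne_of_gt (b_lt_hz hr k h1))

lemma pr_bound (hr : 0 < r) (k : ℕ) {z : ℂ} (h1 : Real.exp (-r) ≤ ‖z‖) (h2 : ‖z‖ ≤ 1) :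
    ‖pr r k z‖ ≤ C0 r * ‖1 - z‖ * (Real.exp (-(2*r)))^k := by
  rw [pr_eq r k z (ha_ne hr k h2) (hb_ne hr k h1)]
  set a := Real.exp (2 * ((k:ℝ) + 1) * r) with ha_def
  set b := Real.exp (-(2 * ((k:ℝ) + 1) * r)) with hb_def
  set E := Real.exp (2 * (k:ℝ) * r) with hE_def
  set Q := Real.exp (2 * r) with hQ_def
  set ρ := Real.exp (-(2*r)) with hρ_def
  have haEQ : a = E * Q := by rw [ha_def, hE_def, hQ_def, ← Real.exp_add]; ring_nf
  have hρQ : ρ * Q = 1 := by rw [hρ_def, hQ_def, ← Real.exp_add]; ring_nf; exact Real.exp_zero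
  have hE1 : 1 ≤ E := by
    rw [hE_def, ← Real.exp_zero]; apply Real.exp_le_exp.2; nlinarith [Nat.cast_nonneg (α := ℝ) k]
  have hQ1 : 1 < Q := by
    rw [hQ_def, ← Real.exp_zero]; apply Real.exp_lt_exp.2; linarith
  have hρ1 : ρ < 1 := by nlinarith
  have hρ0 : 0 < ρ := Real.exp_pos _
  have hρk : ρ^k * E = 1 := by
    rw [hρ_def, hE_def, ← Real.exp_nat_mul, ← Real.exp_add]; ring_nf; exact Real.exp_zero
  have hbρ : b ≤ ρ := by
    rw [hb_def, hρ_def]; apply Real.exp_le_exp.2; nlinarith [Nat.cast_nonneg (α := ℝ) k]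
  have hb0 : 0 < b := Real.exp_pos _
  have hc2 : 0 < Real.exp (-r) - ρ := by
    rw [hρ_def]
    have : (-(2*r)) < -r := by linarith
    exact sub_pos.2 (Real.exp_lt_exp.2 this)
  have ha1 : 1 < a := by nlinarith
  have hd1 : E * Q * (1 - ρ) ≤ ‖(a:ℂ) - z‖ := by
    have h5 := lower1 a z h2 (le_of_lt ha1)
    have h4 : E * Q * (1 - ρ) ≤ a - 1 := by rw [haEQ]; nlinarith
    linarith
  have hd2 : Real.exp (-r) - ρ ≤ ‖(b:ℂ) - z‖ := by
    have h5 := lower2 b z (le_of_lt hb0) (by linarith : b ≤ ‖z‖)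
    linarith
  have hnum : ‖2 * (1 - z ^ 2)‖ = 2 * (‖1 - z‖ * ‖1 + z‖) := by
    have h6 : (1 : ℂ) - z ^ 2 = (1 - z) * (1 + z) := by ring
    rw [h6, norm_mul, norm_mul]; norm_num
  have h1z : ‖1 + z‖ ≤ 2 := by
    calc ‖1 + z‖ ≤ ‖(1:ℂ)‖ + ‖z‖ := norm_add_le _ _
    _ ≤ 2 := by rw [norm_one]; linarith
  rw [norm_div, hnum, norm_mul]
  have hEQpos : 0 < E * Q * (1 - ρ) := by nlinarith
  have step : 2 * (‖1 - z‖ * ‖1 + z‖) / (‖(a:ℂ) - z‖ * ‖(b:ℂ) - z‖)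
      ≤ (4 * ‖1 - z‖) / ((E * Q * (1 - ρ)) * (Real.exp (-r) - ρ)) := by
    apply div_le_div₀ (by positivity) ?_ (by positivity) ?_
    · nlinarith [norm_nonneg (1 - z), norm_nonneg (1 + z)]
    · exact mul_le_mul hd1 hd2 (le_of_lt hc2) (norm_nonneg _)
  refine step.trans ?_
  have hE0 : (0:ℝ) < E := Real.exp_pos _
  have hne1 : (0:ℝ) < 1 - ρ := by nlinarith
  calc (4 * ‖1 - z‖) / ((E * Q * (1 - ρ)) * (Real.exp (-r) - ρ))
      ≤ (4 * ‖1 - z‖) / ((E * (1 - ρ)) * (Real.exp (-r) - ρ)) := by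
        gcongr <;> nlinarith [norm_nonneg ((1:ℂ) - z)]
    _ = C0 r * ‖1 - z‖ * ρ^k := by
        have hc : ρ = Real.exp (-(2*r)) := hρ_def
        have key : C0 r * ((1 - ρ) * (Real.exp (-r) - ρ)) = 4 := by
          rw [C0, ← hc]
          field_simp
        rw [div_eq_iff (by positivity : ((E * (1 - ρ)) * (Real.exp (-r) - ρ)) ≠ 0)]
        linear_combination (-(‖1 - z‖ * (ρ^k * E))) * key + (-(4 * ‖1 - z‖)) * hρk

lemma pr_bound' (hr : 0 < r) (k : ℕ) {z : ℂ} (h1 : Real.exp (-r) ≤ ‖z‖) (h2 : ‖z‖ ≤ 1) :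
    ‖pr r k z‖ ≤ (C0 r * 2) * (Real.exp (-(2*r)))^k := by
  refine (pr_bound hr k h1 h2).trans ?_
  have h3 : ‖(1:ℂ) - z‖ ≤ 2 := by
    calc ‖(1:ℂ) - z‖ ≤ ‖(1:ℂ)‖ + ‖z‖ := norm_sub_le _ _
    _ ≤ 2 := by rw [norm_one]; linarith
  have h4 : (0:ℝ) ≤ (Real.exp (-(2*r)))^k := by positivity
  have h5 : (0:ℝ) < C0 r := by
    have h6 : Real.exp (-(2*r)) < Real.exp (-r) := Real.exp_lt_exp.2 (by linarith)
    have h7 : Real.exp (-(2*r)) < 1 := by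
      rw [← Real.exp_zero]; exact Real.exp_lt_exp.2 (by linarith)
    have : 0 < (1 - Real.exp (-(2 * r))) * (Real.exp (-r) - Real.exp (-(2 * r))) := by nlinarith
    rw [C0]; positivity
  have h8 := mul_le_mul_of_nonneg_right (mul_le_mul_of_nonneg_left h3 (le_of_lt h5)) h4
  linarith

end WithR

section WithR2

variable {r : ℝ}

lemma summable_geom (hr : 0 < r) :
    Summable (fun k : ℕ => (C0 r * 2) * (Real.exp (-(2*r)))^k) := by
  apply Summable.mul_left
  apply summable_geometric_of_lt_one (Real.exp_pos _).le
  rw [← Real.exp_zero]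
  exact Real.exp_lt_exp.2 (by linarith)

lemma summable_pr (hr : 0 < r) {z : ℂ} (h1 : Real.exp (-r) ≤ ‖z‖) (h2 : ‖z‖ ≤ 1) :
    Summable (fun k => pr r k z) :=
  Summable.of_norm_bounded (summable_geom hr) (fun k => pr_bound' hr k h1 h2)

lemma annulusSum_eq (r : ℝ) (z : ℂ) (N : ℕ) :
    annulusSum r z N = f r 0 z + ∑ k ∈ Finset.range N, pr r k z := by
  induction N with
  | zero =>
    simp only [annulusSum, Nat.cast_zero, neg_zero, Finset.Icc_self, Finset.sum_singleton,
      Finset.range_zero, Finset.sum_empty, add_zero]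
    rfl
  | succ n ih =>
    have hins : Finset.Icc (-((n+1 : ℕ) : ℤ)) ((n+1 : ℕ) : ℤ)
        = insert ((n : ℤ) + 1) (insert (-((n : ℤ) + 1)) (Finset.Icc (-(n : ℕ) : ℤ) ((n : ℕ) : ℤ))) := by
      ext x
      simp only [Finset.mem_Icc, Finset.mem_insert]
      push_cast
      omega
    have hmem1 : ((n : ℤ) + 1) ∉ insert (-((n : ℤ) + 1)) (Finset.Icc (-(n : ℕ) : ℤ) ((n : ℕ) : ℤ)) := by
      simp only [Finset.mem_insert, Finset.mem_Icc]
      omega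
    have hmem2 : (-((n : ℤ) + 1)) ∉ Finset.Icc (-(n : ℕ) : ℤ) ((n : ℕ) : ℤ) := by
      simp only [Finset.mem_Icc]
      omega
    rw [annulusSum, hins, Finset.sum_insert hmem1, Finset.sum_insert hmem2]
    have hold : ∑ k ∈ Finset.Icc (-(n : ℕ) : ℤ) ((n : ℕ) : ℤ),
        (Complex.exp (2 * (k : ℂ) * (r : ℂ)) + z) / (Complex.exp (2 * (k : ℂ) * (r : ℂ)) - z)
        = annulusSum r z n := rfl
    rw [hold, ih, Finset.sum_range_succ]
    have hpr : pr r n z = (Complex.exp (2 * (((n : ℤ) + 1 : ℤ) : ℂ) * (r : ℂ)) + z) /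
          (Complex.exp (2 * (((n : ℤ) + 1 : ℤ) : ℂ) * (r : ℂ)) - z)
        + (Complex.exp (2 * ((-((n : ℤ) + 1) : ℤ) : ℂ) * (r : ℂ)) + z) /
          (Complex.exp (2 * ((-((n : ℤ) + 1) : ℤ) : ℂ) * (r : ℂ)) - z) := by
      rw [pr, f, f]
    rw [hpr]
    ring

lemma tendsto_annulusSum (hr : 0 < r) {z : ℂ} (h1 : Real.exp (-r) ≤ ‖z‖) (h2 : ‖z‖ ≤ 1) :
    Tendsto (fun N => annulusSum r z N) atTop (𝓝 (Sf r z)) := by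
  have hs := summable_pr hr h1 h2
  have h := hs.hasSum.tendsto_sum_nat
  have h2' := h.const_add (f r 0 z)
  refine Tendsto.congr (fun N => ?_) h2'
  exact (annulusSum_eq r z N).symm

/-- open annulus -/
def Om (r : ℝ) : Set ℂ := {w | Real.exp (-r) < ‖w‖ ∧ ‖w‖ < 1}

/-- closed annulus -/
def Kc (r : ℝ) : Set ℂ := {w | Real.exp (-r) ≤ ‖w‖ ∧ ‖w‖ ≤ 1}

/-- closed annulus minus 1 -/
def Kc' (r : ℝ) : Set ℂ := {w | Real.exp (-r) ≤ ‖w‖ ∧ ‖w‖ ≤ 1 ∧ w ≠ 1}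

/-- truncated open annulus -/
def Omd (r δ : ℝ) : Set ℂ := {w | Real.exp (-r) < ‖w‖ ∧ ‖w‖ < 1 ∧ δ < dist w 1}

lemma isOpen_Om : IsOpen (Om r) := by
  have h : Om r = {w : ℂ | Real.exp (-r) < ‖w‖} ∩ {w : ℂ | ‖w‖ < 1} := by
    ext w; simp [Om, Set.mem_setOf_eq, Set.mem_inter_iff]
  rw [h]
  exact (isOpen_lt continuous_const continuous_norm).inter
    (isOpen_lt continuous_norm continuous_const)

lemma isOpen_Omd {δ : ℝ} : IsOpen (Omd r δ) := by
  have h : Omd r δ = ({w : ℂ | Real.exp (-r) < ‖w‖} ∩ {w : ℂ | ‖w‖ < 1})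
      ∩ {w : ℂ | δ < dist w 1} := by
    ext w; simp [Omd, Set.mem_setOf_eq, Set.mem_inter_iff]; tauto
  rw [h]
  exact ((isOpen_lt continuous_const continuous_norm).inter
    (isOpen_lt continuous_norm continuous_const)).inter
    (isOpen_lt continuous_const (continuous_id.dist continuous_const))

lemma tendstoUniformly_T (hr : 0 < r) :
    TendstoUniformlyOn (fun N w => ∑ k ∈ Finset.range N, pr r k w) (T r) atTop (Kc r) :=
  tendstoUniformlyOn_tsum_nat (summable_geom hr) (fun k w hw => pr_bound' hr k hw.1 hw.2)

lemma div_diffOn (c : ℂ) (s : Set ℂ) (h : ∀ w ∈ s, c - w ≠ 0) :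
    DifferentiableOn ℂ (fun w => (c + w) / (c - w)) s :=
  DifferentiableOn.div ((differentiableOn_const c).add differentiableOn_id)
    ((differentiableOn_const c).sub differentiableOn_id) h

lemma div_contOn (c : ℂ) (s : Set ℂ) (h : ∀ w ∈ s, c - w ≠ 0) :
    ContinuousOn (fun w => (c + w) / (c - w)) s :=
  (div_diffOn c s h).continuousOn

lemma denom0_ne {w : ℂ} (hw : w ≠ 1) :
    Complex.exp (2 * ((0 : ℤ) : ℂ) * (r : ℂ)) - w ≠ 0 := by
  have h : Complex.exp (2 * ((0 : ℤ) : ℂ) * (r : ℂ)) = 1 := by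
    norm_num [Complex.exp_zero]
  rw [h]
  exact sub_ne_zero_of_ne (Ne.symm hw)

lemma denom_top_ne (hr : 0 < r) (k : ℕ) {w : ℂ} (h2 : ‖w‖ ≤ 1) :
    Complex.exp (2 * ((((k : ℤ) + 1) : ℤ) : ℂ) * (r : ℂ)) - w ≠ 0 := by
  have h : (((((k : ℤ) + 1) : ℤ) : ℂ)) = ((k : ℝ) + 1 : ℝ) := by push_cast; ring
  rw [h]
  have h3 : (2 : ℂ) * (((k : ℝ) + 1 : ℝ) : ℂ) * (r : ℂ) = ((2 * ((k:ℝ)+1) * r : ℝ) : ℂ) := by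
    push_cast; ring
  rw [h3, ← Complex.ofReal_exp]
  exact ha_ne hr k h2

lemma denom_bot_ne (hr : 0 < r) (k : ℕ) {w : ℂ} (h1 : Real.exp (-r) ≤ ‖w‖) :
    Complex.exp (2 * (((-((k : ℤ) + 1)) : ℤ) : ℂ) * (r : ℂ)) - w ≠ 0 := by
  have h3 : (2 : ℂ) * ((((-((k : ℤ) + 1)) : ℤ)) : ℂ) * (r : ℂ)
      = ((-(2 * ((k:ℝ)+1) * r) : ℝ) : ℂ) := by push_cast; ring
  rw [h3, ← Complex.ofReal_exp]
  exact hb_ne hr k h1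

lemma pr_diffOn (hr : 0 < r) (k : ℕ) {s : Set ℂ}
    (hs : ∀ w ∈ s, Real.exp (-r) ≤ ‖w‖ ∧ ‖w‖ ≤ 1) :
    DifferentiableOn ℂ (fun w => pr r k w) s := by
  apply DifferentiableOn.add
  · exact div_diffOn _ s (fun w hw => denom_top_ne hr k (hs w hw).2)
  · exact div_diffOn _ s (fun w hw => denom_bot_ne hr k (hs w hw).1)

lemma partial_diffOn (hr : 0 < r) (N : ℕ) {s : Set ℂ}
    (hs : ∀ w ∈ s, Real.exp (-r) ≤ ‖w‖ ∧ ‖w‖ ≤ 1) :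
    DifferentiableOn ℂ (fun w => ∑ k ∈ Finset.range N, pr r k w) s :=
  DifferentiableOn.fun_sum (fun k _ => pr_diffOn hr k hs)

lemma T_diffOn (hr : 0 < r) : DifferentiableOn ℂ (T r) (Om r) := by
  have hsub : Om r ⊆ Kc r := fun w hw => ⟨hw.1.le, hw.2.le⟩
  apply TendstoLocallyUniformlyOn.differentiableOn
    (((tendstoUniformly_T hr).mono hsub).tendstoLocallyUniformlyOn)
    (Eventually.of_forall (fun N => partial_diffOn hr N (fun w hw => ⟨hw.1.le, hw.2.le⟩)))
    isOpen_Om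

lemma Sf_diffOn (hr : 0 < r) : DifferentiableOn ℂ (Sf r) (Om r) := by
  apply DifferentiableOn.add ?_ (T_diffOn hr)
  apply div_diffOn
  intro w hw
  have hw1 : w ≠ 1 := by
    intro h
    rw [h] at hw
    have h9 := hw.2
    rw [norm_one] at h9
    exact lt_irrefl _ h9
  exact denom0_ne hw1

lemma T_contOn (hr : 0 < r) : ContinuousOn (T r) (Kc' r) := by
  have hsub : Kc' r ⊆ Kc r := fun w hw => ⟨hw.1, hw.2.1⟩
  apply TendstoUniformlyOn.continuousOn ((tendstoUniformly_T hr).mono hsub)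
  apply Eventually.frequently
  apply Eventually.of_forall
  intro N
  apply continuousOn_finset_sum
  intro k _
  apply ContinuousOn.add
  · exact div_contOn _ _ (fun w hw => denom_top_ne hr k hw.2.1)
  · exact div_contOn _ _ (fun w hw => denom_bot_ne hr k hw.1)

lemma Sf_contOn (hr : 0 < r) : ContinuousOn (Sf r) (Kc' r) := by
  apply ContinuousOn.add ?_ (T_contOn hr)
  apply div_contOn
  intro w hw
  exact denom0_ne hw.2.2

end WithR2

section WithR3

variable {r : ℝ}

lemma nsq_eq (w : ℂ) : Complex.normSq w = ‖w‖^2 := by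
  rw [Complex.sq_norm]

lemma pr_re_eq (r : ℝ) (k : ℕ) (w : ℂ) :
    (pr r k w).re = ((((Real.exp (2 * ((k:ℝ) + 1) * r) : ℝ) : ℂ) + w) /
        (((Real.exp (2 * ((k:ℝ) + 1) * r) : ℝ) : ℂ) - w)).re
      + ((((Real.exp (-(2 * ((k:ℝ) + 1) * r)) : ℝ) : ℂ) + w) /
        (((Real.exp (-(2 * ((k:ℝ) + 1) * r)) : ℝ) : ℂ) - w)).re := by
  have e1 : f r ((k:ℤ) + 1) w = (((Real.exp (2 * ((k:ℝ) + 1) * r) : ℝ) : ℂ) + w) /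
      (((Real.exp (2 * ((k:ℝ) + 1) * r) : ℝ) : ℂ) - w) := by
    rw [f_eq]; norm_num
  have e2 : f r (-((k:ℤ) + 1)) w = (((Real.exp (-(2 * ((k:ℝ) + 1) * r)) : ℝ) : ℂ) + w) /
      (((Real.exp (-(2 * ((k:ℝ) + 1) * r)) : ℝ) : ℂ) - w) := by
    rw [f_eq]; push_cast; ring_nf
  rw [pr, e1, e2, Complex.add_re]

lemma re_f0_nonneg {w : ℂ} (h2 : ‖w‖ ≤ 1) : 0 ≤ (f r 0 w).re := by
  have hxp : Real.exp (2 * (((0:ℤ)):ℝ) * r) = 1 := by norm_num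
  rw [f_eq, hxp, re_div]
  apply div_nonneg ?_ (Complex.normSq_nonneg _)
  have h3 : Complex.normSq w ≤ 1 := by
    rw [nsq_eq]; nlinarith [norm_nonneg w]
  nlinarith

lemma re_f0_zero {w : ℂ} (h2 : ‖w‖ = 1) : (f r 0 w).re = 0 := by
  have hxp : Real.exp (2 * (((0:ℤ)):ℝ) * r) = 1 := by norm_num
  rw [f_eq, hxp, re_div]
  have h3 : Complex.normSq w = 1 := by rw [nsq_eq, h2]; norm_num
  rw [h3]
  norm_num

lemma re_pr_zero (hr : 0 < r) (k : ℕ) {w : ℂ} (h2 : ‖w‖ = 1) (hw : w ≠ 1) :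
    (pr r k w).re = 0 := by
  rw [pr_re_eq]
  apply re_pair_zero
  · rw [nsq_eq, h2, ← Real.exp_add]
    norm_num
  · exact ha_ne hr k h2.le
  · apply hb_ne hr k
    rw [h2, ← Real.exp_zero]
    exact Real.exp_le_exp.2 (by linarith)

/-- real part of `Sf` vanishes on the outer boundary circle -/
lemma re_Sf_outer (hr : 0 < r) {w : ℂ} (h2 : ‖w‖ = 1) (hw : w ≠ 1) :
    (Sf r w).re = 0 := by
  have h1 : Real.exp (-r) ≤ ‖w‖ := by
    rw [h2, ← Real.exp_zero]; exact (Real.exp_le_exp.2 (by linarith))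
  rw [Sf, Complex.add_re, re_f0_zero h2, T, Complex.re_tsum (summable_pr hr h1 h2.le)]
  have hz : ∀ k : ℕ, (pr r k w).re = 0 := fun k => re_pr_zero hr k h2 hw
  rw [tsum_congr hz, tsum_zero]
  norm_num

/-- general lower bound for the real part on the closed annulus -/
lemma re_Sf_lower (hr : 0 < r) {w : ℂ} (h1 : Real.exp (-r) ≤ ‖w‖) (h2 : ‖w‖ ≤ 1) :
    -(C0 r * ‖1 - w‖ * (1 - Real.exp (-(2*r)))⁻¹) ≤ (Sf r w).re := by
  set ρ := Real.exp (-(2*r)) with hρ_def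
  have hρ0 : 0 < ρ := Real.exp_pos _
  have hρ1 : ρ < 1 := by
    rw [hρ_def, ← Real.exp_zero]; exact Real.exp_lt_exp.2 (by linarith)
  have hsum := summable_pr hr h1 h2
  have hsumre : Summable (fun k => (pr r k w).re) := (Complex.hasSum_re hsum.hasSum).summable
  have hsumb : Summable (fun k : ℕ => -(C0 r * ‖1 - w‖ * ρ^k)) := by
    apply Summable.neg
    apply Summable.mul_left
    exact summable_geometric_of_lt_one hρ0.le hρ1
  have hterm : ∀ k : ℕ, -(C0 r * ‖1 - w‖ * ρ^k) ≤ (pr r k w).re := by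
    intro k
    have hb := pr_bound hr k h1 h2
    have habs : |(pr r k w).re| ≤ ‖pr r k w‖ := Complex.abs_re_le_norm _
    have : -(pr r k w).re ≤ |(pr r k w).re| := neg_le_abs _
    linarith
  have hT : -(C0 r * ‖1 - w‖ * (1-ρ)⁻¹) ≤ (T r w).re := by
    rw [T, Complex.re_tsum hsum]
    have := Summable.tsum_le_tsum hterm hsumb hsumre
    rw [tsum_neg] at this
    have hgeo : ∑' k : ℕ, C0 r * ‖1 - w‖ * ρ^k = C0 r * ‖1 - w‖ * (1-ρ)⁻¹ := by
      rw [tsum_mul_left, tsum_geometric_of_lt_one hρ0.le hρ1]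
    rw [hgeo] at this
    exact this
  have hf0 := re_f0_nonneg (r := r) h2
  rw [Sf, Complex.add_re]
  linarith

lemma inner_ne (hr : 0 < r) (k : ℤ) {w : ℂ} (hw : ‖w‖ = Real.exp (-r)) :
    ((Real.exp (2 * (k:ℝ) * r) : ℝ) : ℂ) - w ≠ 0 := by
  apply sub_ne (Real.exp_pos _).le
  rw [hw]
  intro h
  rw [Real.exp_eq_exp] at h
  have h2 : ((2 * k + 1 : ℤ) : ℝ) * r = 0 := by push_cast; linarith
  have h3 : ((2 * k + 1 : ℤ) : ℝ) = 0 := by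
    rcases mul_eq_zero.1 h2 with h | h
    · exact h
    · exact absurd h (ne_of_gt hr)
  have h4 : (2 * k + 1 : ℤ) = 0 := by exact_mod_cast h3
  omega

/-- real part of `Sf` is nonnegative on the inner boundary circle -/
lemma re_Sf_inner (hr : 0 < r) {w : ℂ} (hw : ‖w‖ = Real.exp (-r)) :
    0 ≤ (Sf r w).re := by
  have h1 : Real.exp (-r) ≤ ‖w‖ := hw.ge
  have h2 : ‖w‖ ≤ 1 := by
    rw [hw, ← Real.exp_zero]; exact Real.exp_le_exp.2 (by linarith)
  have hnsq : Complex.normSq w = Real.exp (-(2*r)) := by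
    rw [nsq_eq, hw, sq, ← Real.exp_add]; ring_nf
  have ht : Tendsto (fun N => (annulusSum r w N).re) atTop (𝓝 ((Sf r w).re)) :=
    (Complex.continuous_re.tendsto _).comp (tendsto_annulusSum hr h1 h2)
  refine ge_of_tendsto ht (Eventually.of_forall (fun N => ?_))
  have hre : (annulusSum r w N).re = ∑ k ∈ Finset.Icc (-(N : ℤ)) (N : ℤ), (f r k w).re := by
    rw [annulusSum, Complex.re_sum]; rfl
  have hsplit : Finset.Icc (-(N : ℤ)) (N : ℤ)
      = insert ((N : ℤ)) (Finset.Icc (-(N : ℤ)) ((N : ℤ) - 1)) := by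
    ext x
    simp only [Finset.mem_Icc, Finset.mem_insert]
    omega
  have hNmem : ((N : ℤ)) ∉ Finset.Icc (-(N : ℤ)) ((N : ℤ) - 1) := by
    simp only [Finset.mem_Icc]; omega
  have hcancel : ∑ k ∈ Finset.Icc (-(N : ℤ)) ((N : ℤ) - 1), (f r k w).re = 0 := by
    refine Finset.sum_involution (fun k _ => -k - 1) ?_ ?_ (fun k hk => ?_) ?_
    · intro k hk
      rw [f_eq, f_eq]
      apply re_pair_zero
      · rw [hnsq, ← Real.exp_add]
        congr 1
        push_cast
        ring
      · exact inner_ne hr k hw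
      · exact inner_ne hr (-k-1) hw
    · intro k _ _
      show -k - 1 ≠ k
      omega
    · simp only [Finset.mem_Icc] at hk ⊢
      omega
    · intro k hk
      show -(-k - 1) - 1 = k
      omega
  rw [hre, hsplit, Finset.sum_insert hNmem, hcancel, add_zero, f_eq, re_div]
  apply div_nonneg ?_ (Complex.normSq_nonneg _)
  have hN1 : (1:ℝ) ≤ Real.exp (2 * ((N:ℤ):ℝ) * r) := by
    rw [← Real.exp_zero]
    apply Real.exp_le_exp.2
    have : (0:ℝ) ≤ ((N:ℤ):ℝ) := by positivity
    nlinarith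
  have hρ1 : Complex.normSq w ≤ 1 := by
    rw [hnsq, ← Real.exp_zero]
    exact Real.exp_le_exp.2 (by linarith)
  nlinarith

end WithR3

section WithR4

variable {r : ℝ}

lemma C0_pos (hr : 0 < r) : 0 < C0 r := by
  have h6 : Real.exp (-(2*r)) < Real.exp (-r) := Real.exp_lt_exp.2 (by linarith)
  have h7 : Real.exp (-(2*r)) < 1 := by
    rw [← Real.exp_zero]; exact Real.exp_lt_exp.2 (by linarith)
  have h8 : 0 < (1 - Real.exp (-(2 * r))) * (Real.exp (-r) - Real.exp (-(2 * r))) := by nlinarith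
  rw [C0]; positivity

lemma norm_cexp (u : ℂ) : ‖Complex.exp u‖ = Real.exp u.re := by
  rw [Complex.norm_exp]

lemma om_eq (hr : 0 < r) : Om r = Complex.exp '' {w : ℂ | w.re ∈ Set.Ioo (-r) 0} := by
  ext z
  constructor
  · intro hz
    have hz0 : z ≠ 0 := by
      intro h
      rw [h] at hz
      have h1 := hz.1
      rw [norm_zero] at h1
      exact absurd h1 (not_lt.2 (Real.exp_pos _).le)
    refine ⟨Complex.log z, ⟨?_, ?_⟩, Complex.exp_log hz0⟩
    · rw [Complex.log_re]
      have h1 : Real.exp (-r) < ‖z‖ := by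
        exact hz.1
      calc -r = Real.log (Real.exp (-r)) := (Real.log_exp _).symm
        _ < Real.log ‖z‖ := Real.log_lt_log (Real.exp_pos _) h1
    · rw [Complex.log_re]
      apply Real.log_neg
      · exact lt_of_lt_of_le (Real.exp_pos _) hz.1.le
      · exact hz.2
  · rintro ⟨w, hw, rfl⟩
    constructor
    · rw [norm_cexp]
      exact Real.exp_lt_exp.2 hw.1
    · rw [norm_cexp, ← Real.exp_zero]
      exact Real.exp_lt_exp.2 hw.2

lemma om_preconn (hr : 0 < r) : IsPreconnected (Om r) := by
  rw [om_eq hr]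
  apply IsPreconnected.image ?_ _ (Complex.continuous_exp.continuousOn)
  have hconv : Convex ℝ {w : ℂ | w.re ∈ Set.Ioo (-r) 0} :=
    (convex_Ioo (-r) (0:ℝ)).linear_preimage Complex.reLm
  exact hconv.isPreconnected

lemma dist_eq_norm_one_sub (w : ℂ) : dist w 1 = ‖1 - w‖ := by
  rw [dist_eq_norm, norm_sub_rev]

/-- Re Sf is nonnegative on the open annulus: maximum modulus principle -/
lemma re_Sf_nonneg (hr : 0 < r) {z : ℂ} (hz : z ∈ Om r) : 0 ≤ (Sf r z).re := by
  set ρ := Real.exp (-(2*r)) with hρ_def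
  have hρ0 : 0 < ρ := Real.exp_pos _
  have hρ1 : ρ < 1 := by
    rw [hρ_def, ← Real.exp_zero]; exact Real.exp_lt_exp.2 (by linarith)
  set M := C0 r * (1 - ρ)⁻¹ with hM_def
  have hM : 0 < M := by
    have h8 := C0_pos hr
    have h9 : 0 < (1 - ρ)⁻¹ := inv_pos.2 (by linarith)
    rw [hM_def]
    exact mul_pos h8 h9
  have hzne1 : z ≠ 1 := by
    intro h
    rw [h] at hz
    have h2 : ‖(1:ℂ)‖ < 1 := hz.2
    rw [norm_one] at h2
    exact lt_irrefl _ h2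
  have hd0 : 0 < dist z 1 := dist_pos.2 hzne1
  have key : ∀ δ : ℝ, 0 < δ → δ < dist z 1 → -(δ * M) ≤ (Sf r z).re := by
    intro δ hδ0 hδ
    have hmem : z ∈ Omd r δ := ⟨hz.1, hz.2, hδ⟩
    have hbdd : Bornology.IsBounded (Omd r δ) := by
      apply Bornology.IsBounded.subset (Metric.isBounded_ball (x := (0:ℂ)) (r := 2))
      intro w hw
      rw [Metric.mem_ball, dist_zero_right]
      have h3 : ‖w‖ < 1 := hw.2.1
      linarith
    have hOmdOm : Omd r δ ⊆ Om r := fun w hw => ⟨hw.1, hw.2.1⟩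
    have hclos : closure (Omd r δ) ⊆ Kc' r := by
      have hcl : IsClosed (({w : ℂ | Real.exp (-r) ≤ ‖w‖} ∩ {w : ℂ | ‖w‖ ≤ 1})
          ∩ {w : ℂ | δ ≤ dist w 1}) := by
        exact ((isClosed_le continuous_const continuous_norm).inter
          (isClosed_le continuous_norm continuous_const)).inter
          (isClosed_le continuous_const (continuous_id.dist continuous_const))
      have hsub : Omd r δ ⊆ (({w : ℂ | Real.exp (-r) ≤ ‖w‖} ∩ {w : ℂ | ‖w‖ ≤ 1})
          ∩ {w : ℂ | δ ≤ dist w 1}) := by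
        intro w hw
        exact ⟨⟨hw.1.le, hw.2.1.le⟩, hw.2.2.le⟩
      refine (closure_minimal hsub hcl).trans ?_
      intro w hw
      refine ⟨hw.1.1, hw.1.2, ?_⟩
      intro h
      rw [h] at hw
      have h5 : δ ≤ dist (1:ℂ) 1 := hw.2
      rw [dist_self] at h5
      linarith
    have hdc : DiffContOnCl ℂ (fun w => Complex.exp (-Sf r w)) (Omd r δ) := by
      constructor
      · exact (((Sf_diffOn hr).mono hOmdOm).neg).cexp
      · exact (((Sf_contOn hr).mono hclos).neg).cexp
    have hfront : ∀ w ∈ frontier (Omd r δ), ‖Complex.exp (-Sf r w)‖ ≤ Real.exp (δ * M) := by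
      intro w hw
      have hwcl : w ∈ closure (Omd r δ) := hw.1
      have hwK : w ∈ Kc' r := hclos hwcl
      have hwd : δ ≤ dist w 1 := by
        have hcl : IsClosed {u : ℂ | δ ≤ dist u 1} :=
          isClosed_le continuous_const (continuous_id.dist continuous_const)
        have hsub : Omd r δ ⊆ {u : ℂ | δ ≤ dist u 1} := fun u hu => hu.2.2.le
        exact closure_minimal hsub hcl hwcl
      have hwnot : w ∉ Omd r δ := by
        have := hw.2
        rw [isOpen_Omd.interior_eq] at this
        exact this
      rw [norm_cexp, Complex.neg_re]
      have hcases : ‖w‖ = Real.exp (-r) ∨ ‖w‖ = 1 ∨ dist w 1 = δ := by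
        by_cases e1 : ‖w‖ = Real.exp (-r)
        · exact Or.inl e1
        by_cases e2 : ‖w‖ = 1
        · exact Or.inr (Or.inl e2)
        right; right
        by_contra e3
        exact hwnot ⟨lt_of_le_of_ne hwK.1 (Ne.symm e1), lt_of_le_of_ne hwK.2.1 e2,
          lt_of_le_of_ne hwd (fun h => e3 h.symm)⟩
      have hδM : 0 ≤ δ * M := by positivity
      rcases hcases with e | e | e
      · have h5 := re_Sf_inner hr e
        calc Real.exp (-(Sf r w).re) ≤ Real.exp 0 := Real.exp_le_exp.2 (by linarith)
          _ ≤ Real.exp (δ * M) := Real.exp_le_exp.2 hδM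
      · have h5 := re_Sf_outer hr e hwK.2.2
        calc Real.exp (-(Sf r w).re) = Real.exp 0 := by rw [h5, neg_zero]
          _ ≤ Real.exp (δ * M) := Real.exp_le_exp.2 hδM
      · have h5 := re_Sf_lower hr hwK.1 hwK.2.1
        have h6 : ‖1 - w‖ = δ := by rw [← dist_eq_norm_one_sub, e]
        rw [h6] at h5
        apply Real.exp_le_exp.2
        have h7 : C0 r * δ * (1 - ρ)⁻¹ = δ * M := by rw [hM_def]; ring
        rw [h7] at h5
        linarith
    have hfin := Complex.norm_le_of_forall_mem_frontier_norm_le hbdd hdc hfront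
      (subset_closure hmem)
    rw [norm_cexp, Complex.neg_re] at hfin
    have := Real.exp_le_exp.1 hfin
    linarith
  by_contra hneg
  push_neg at hneg
  set δ := min (dist z 1 / 2) (-(Sf r z).re / (2 * M)) with hδ_def
  have hδ0 : 0 < δ := by
    apply lt_min (by linarith)
    have h8 : 0 < -(Sf r z).re := by linarith
    positivity
  have hδ1 : δ < dist z 1 := lt_of_le_of_lt (min_le_left _ _) (by linarith)
  have h := key δ hδ0 hδ1
  have h9 : δ ≤ -(Sf r z).re / (2 * M) := min_le_right _ _
  have h10 : δ * M ≤ -(Sf r z).re / 2 := by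
    have h12 := mul_le_mul_of_nonneg_right h9 hM.le
    have h13 : -(Sf r z).re / (2 * M) * M = -(Sf r z).re / 2 := by
      field_simp
    rw [h13] at h12
    exact h12
  have h11 : 0 < -(Sf r z).re := by linarith
  linarith

end WithR4

section WithR5

variable {r : ℝ}

lemma z1_norm (hr : 0 < r) : ‖((-Real.exp (-(r/2)) : ℝ) : ℂ)‖ = Real.exp (-(r/2)) := by
  rw [Complex.norm_real, Real.norm_eq_abs, abs_neg, abs_of_pos (Real.exp_pos _)]

lemma z1_mem (hr : 0 < r) : ((-Real.exp (-(r/2)) : ℝ) : ℂ) ∈ Om r := by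
  rw [Om, Set.mem_setOf_eq, z1_norm hr]
  constructor
  · exact Real.exp_lt_exp.2 (by linarith)
  · rw [← Real.exp_zero]
    exact Real.exp_lt_exp.2 (by linarith)

/-- Re Sf is strictly positive at the negative real point -/
lemma re_Sf_pos_pt (hr : 0 < r) : 0 < (Sf r ((-Real.exp (-(r/2)) : ℝ) : ℂ)).re := by
  set t := Real.exp (-(r/2)) with ht_def
  set z₁ : ℂ := ((-t : ℝ) : ℂ) with hz₁_def
  have ht0 : 0 < t := Real.exp_pos _
  have ht1 : t < 1 := by
    rw [ht_def, ← Real.exp_zero]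
    exact Real.exp_lt_exp.2 (by linarith)
  have hn : ‖z₁‖ = t := z1_norm hr
  have h1 : Real.exp (-r) ≤ ‖z₁‖ := by
    rw [hn, ht_def]
    exact (Real.exp_le_exp.2 (by linarith))
  have h2 : ‖z₁‖ ≤ 1 := by rw [hn]; linarith
  rw [Sf, Complex.add_re]
  have hf0 : 0 < (f r 0 z₁).re := by
    have hxp : Real.exp (2 * (((0:ℤ)):ℝ) * r) = 1 := by norm_num
    rw [f_eq, hxp, re_div]
    have hnsq : Complex.normSq z₁ = t^2 := by
      rw [nsq_eq, hn]
    have hden : Complex.normSq (((1:ℝ):ℂ) - z₁) = (1 + t)^2 := by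
      rw [nsq_sub, hnsq]
      have hre : z₁.re = -t := by rw [hz₁_def, Complex.ofReal_re]
      rw [hre]
      ring
    rw [hden]
    have hnum : (0:ℝ) < 1^2 - Complex.normSq z₁ := by rw [hnsq]; nlinarith
    apply div_pos hnum (by positivity)
  have hT : 0 ≤ (T r z₁).re := by
    rw [T, Complex.re_tsum (summable_pr hr h1 h2)]
    apply tsum_nonneg
    intro k
    set a := Real.exp (2 * ((k:ℝ) + 1) * r) with ha_def
    set b := Real.exp (-(2 * ((k:ℝ) + 1) * r)) with hb_def
    have ha0 : 0 < a := Real.exp_pos _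
    have hb0 : 0 < b := Real.exp_pos _
    rw [pr_eq r k z₁ (ha_ne hr k h2) (hb_ne hr k h1)]
    have hcast : 2 * (1 - z₁^2) / (((a:ℝ):ℂ) - z₁) / (((b:ℝ):ℂ) - z₁)
        = ((2 * (1 - t^2) / (a + t) / (b + t) : ℝ) : ℂ) := by
      rw [hz₁_def]
      push_cast
      ring
    rw [div_mul_eq_div_div, hcast, Complex.ofReal_re]
    have hnum : (0:ℝ) ≤ 2 * (1 - t^2) := by nlinarith
    positivity
  linarith

end WithR5

end Stmt3Aux


/-- For every `r > 0`, `Re S_r > 0` on the annulus `A_r = {e^{-r} < |z| < 1}`. -/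
theorem stmt3 (r : ℝ) (hr : 0 < r) (z : ℂ)
    (hz1 : Real.exp (-r) < ‖z‖) (hz2 : ‖z‖ < 1) :
    ∃ S : ℂ, Tendsto (fun N => annulusSum r z N) atTop (𝓝 S) ∧ 0 < S.re := by
  have hz : z ∈ Stmt3Aux.Om r := ⟨hz1, hz2⟩
  refine ⟨Stmt3Aux.Sf r z, Stmt3Aux.tendsto_annulusSum hr hz1.le hz2.le, ?_⟩
  have h0 := Stmt3Aux.re_Sf_nonneg hr hz
  rcases lt_or_eq_of_le h0 with h | h
  · exact h
  · exfalso
    have hmax : IsMaxOn (norm ∘ (fun w => Complex.exp (-Stmt3Aux.Sf r w))) (Stmt3Aux.Om r) z := by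
      intro w hw
      have h5 := Stmt3Aux.re_Sf_nonneg hr hw
      simp only [Function.comp_apply, Stmt3Aux.norm_cexp, Complex.neg_re, Set.mem_setOf_eq]
      exact Real.exp_le_exp.2 (by linarith)
    have heq := Complex.norm_eqOn_of_isPreconnected_of_isMaxOn (Stmt3Aux.om_preconn hr)
      Stmt3Aux.isOpen_Om (((Stmt3Aux.Sf_diffOn hr).neg).cexp) hz hmax
    have hev := heq (Stmt3Aux.z1_mem hr)
    simp only [Function.comp_apply, Function.const_apply, Stmt3Aux.norm_cexp, Pi.neg_apply,
      Complex.neg_re] at hev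
    rw [← h, neg_zero, Real.exp_zero] at hev
    have h6 := Stmt3Aux.re_Sf_pos_pt hr
    rw [Real.exp_eq_one_iff] at hev
    linarith
end

section
/- For every p > 0 and every z with 4e^{-p} ≤ |z| ≤ 1, the function Ŝ_p(z) := 1 − S_p(e^{-p}/z) satisfies |Ŝ_p(z)| ≤ 8 e^{-p} / |z|. -/
open Complex Filter Topology

set_option maxHeartbeats 1000000

lemma icc_sum_eq (f : ℤ → ℂ) (N : ℕ) :
    ∑ k ∈ Finset.Icc (-(N:ℤ)) (N:ℤ), f k
      = f 0 + ∑ k ∈ Finset.range N, (f ((k:ℤ)+1) + f (-((k:ℤ)+1))) := by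
  induction N with
  | zero => simp
  | succ n ih =>
    have h1 : Finset.Icc (-((n+1:ℕ):ℤ)) ((n+1:ℕ):ℤ)
        = insert ((n:ℤ)+1) (insert (-((n:ℤ)+1)) (Finset.Icc (-(n:ℕ):ℤ) ((n:ℕ):ℤ))) := by
      ext k; simp only [Finset.mem_Icc, Finset.mem_insert]; push_cast; omega
    have h2 : ((n:ℤ)+1) ∉ insert (-((n:ℤ)+1)) (Finset.Icc (-(n:ℕ):ℤ) ((n:ℕ):ℤ)) := by
      simp only [Finset.mem_Icc, Finset.mem_insert]; omega
    have h3 : (-((n:ℤ)+1)) ∉ Finset.Icc (-(n:ℕ):ℤ) ((n:ℕ):ℤ) := by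
      simp only [Finset.mem_Icc]; omega
    rw [h1, Finset.sum_insert h2, Finset.sum_insert h3, ih, Finset.sum_range_succ]
    ring

/-- For every `p > 0` and every `z` with `4e^{-p} ≤ |z| ≤ 1`, the function
`Ŝ_p(z) = 1 − S_p(e^{-p}/z)` satisfies `|Ŝ_p(z)| ≤ 8e^{-p}/|z|`. -/
theorem stmt8 (p : ℝ) (hp : 0 < p) (z : ℂ)
    (h1 : 4 * Real.exp (-p) ≤ ‖z‖) (h2 : ‖z‖ ≤ 1) :
    ∃ S : ℂ,
      Tendsto (fun N => annulusSum p ((Real.exp (-p) : ℂ) / z) N) atTop (𝓝 S) ∧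
      ‖1 - S‖ ≤ 8 * Real.exp (-p) / ‖z‖ := by
  have hep : (0:ℝ) < Real.exp (-p) := Real.exp_pos _
  have hzpos : 0 < ‖z‖ := by nlinarith
  have hz0 : z ≠ 0 := by
    intro h; rw [h] at hzpos; simp at hzpos
  set w : ℂ := ((Real.exp (-p) : ℝ) : ℂ) / z with hwdef
  set a : ℝ := ‖w‖ with hadef
  have haw : a = Real.exp (-p) / ‖z‖ := by
    rw [hadef, hwdef, norm_div, Complex.norm_real, Real.norm_eq_abs, abs_of_pos hep]
  have ha14 : a ≤ 1/4 := by
    rw [haw, div_le_iff₀ hzpos]; linarith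
  have halow : Real.exp (-p) ≤ a := by
    rw [haw, le_div_iff₀ hzpos]; nlinarith
  have hapos : 0 < a := lt_of_lt_of_le hep halow
  have hq : Real.exp (-p) ≤ 1/4 := halow.trans ha14
  have he2 : Real.exp (-(2*p)) ≤ 1/16 := by
    have : Real.exp (-(2*p)) = Real.exp (-p) * Real.exp (-p) := by
      rw [← Real.exp_add]; ring_nf
    nlinarith
  -- the summand
  set f : ℤ → ℂ := fun k =>
    (Complex.exp (2 * (k : ℂ) * (p : ℂ)) + w) / (Complex.exp (2 * (k : ℂ) * (p : ℂ)) - w)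
    with hfdef
  set g : ℕ → ℂ := fun k => f ((k:ℤ)+1) + f (-((k:ℤ)+1)) with hgdef
  -- per-term bound
  have key : ∀ k : ℕ, ‖g k‖ ≤ (17/6 * a) * (1/16)^k := by
    intro k
    set E1 : ℂ := Complex.exp (2 * (((k:ℤ)+1 : ℤ) : ℂ) * (p : ℂ)) with hE1
    set E2 : ℂ := Complex.exp (2 * ((-((k:ℤ)+1) : ℤ) : ℂ) * (p : ℂ)) with hE2
    set r1 : ℝ := Real.exp (2 * ((k:ℝ)+1) * p) with hr1
    set r2 : ℝ := Real.exp (-(2 * ((k:ℝ)+1) * p)) with hr2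
    have hn1 : ‖E1‖ = r1 := by
      have harg : 2 * (((k:ℤ)+1 : ℤ) : ℂ) * (p : ℂ) = ((2 * ((k:ℝ)+1) * p : ℝ) : ℂ) := by
        push_cast; ring
      rw [hE1, harg, Complex.norm_exp, Complex.ofReal_re, hr1]
    have hn2 : ‖E2‖ = r2 := by
      have harg : 2 * ((-((k:ℤ)+1) : ℤ) : ℂ) * (p : ℂ) = ((-(2 * ((k:ℝ)+1) * p) : ℝ) : ℂ) := by
        push_cast; ring
      rw [hE2, harg, Complex.norm_exp, Complex.ofReal_re, hr2]
    have hr1ge : 1 ≤ r1 := by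
      rw [hr1]; apply Real.one_le_exp; positivity
    have hr2a : r2 ≤ a * a * (1/16)^k := by
      have heq : r2 = Real.exp (-p) * Real.exp (-p) * (Real.exp (-(2*p)))^k := by
        rw [hr2, ← Real.exp_nat_mul, ← Real.exp_add, ← Real.exp_add]; congr 1; ring
      rw [heq]
      have h16 : (Real.exp (-(2*p)))^k ≤ (1/16)^k :=
        pow_le_pow_left₀ (le_of_lt (Real.exp_pos _)) he2 k
      have t1 : Real.exp (-p) * Real.exp (-p) ≤ a * a := by nlinarith
      exact mul_le_mul t1 h16 (pow_nonneg (le_of_lt (Real.exp_pos _)) k) (by positivity)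
    have hr2g : r2 ≤ (1/16)^(k+1) := by
      have heq : r2 = (Real.exp (-(2*p)))^(k+1) := by
        rw [hr2, ← Real.exp_nat_mul]; congr 1; push_cast; ring
      rw [heq]
      exact pow_le_pow_left₀ (le_of_lt (Real.exp_pos _)) he2 (k+1)
    have hd1 : (3/4) * r1 ≤ ‖E1 - w‖ := by
      have := norm_sub_norm_le E1 w
      rw [hn1] at this
      have haw' : ‖w‖ = a := rfl
      rw [haw'] at this
      linarith
    have hd2 : (3/4) * a ≤ ‖E2 - w‖ := by
      rw [norm_sub_rev]
      have := norm_sub_norm_le w E2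
      rw [hn2] at this
      have haw' : ‖w‖ = a := rfl
      rw [haw'] at this
      have hr2small : r2 ≤ (1/4) * a := by
        have : r2 ≤ Real.exp (-(2*p)) := by
          rw [hr2]; apply Real.exp_le_exp.2; nlinarith
        have h2p : Real.exp (-(2*p)) = Real.exp (-p) * Real.exp (-p) := by
          rw [← Real.exp_add]; ring_nf
        nlinarith
      linarith
    have hne1 : E1 - w ≠ 0 := by
      intro h; rw [h] at hd1; simp at hd1; nlinarith
    have hne2 : E2 - w ≠ 0 := by
      intro h; rw [h] at hd2; simp at hd2; nlinarith
    have hgid : g k = 2*w/(E1 - w) + 2*E2/(E2 - w) := by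
      show f ((k:ℤ)+1) + f (-((k:ℤ)+1)) = _
      simp only [hfdef]
      rw [← hE1, ← hE2]
      field_simp
      ring
    rw [hgid]
    have hb1 : ‖2*w/(E1 - w)‖ ≤ (8/3) * a * (1/16)^(k+1) := by
      rw [norm_div, norm_mul]
      have h2 : ‖(2:ℂ)‖ = 2 := by simp
      have haw' : ‖w‖ = a := rfl
      rw [h2, haw']
      have hpos : (0:ℝ) < (3/4)*r1 := by linarith
      calc 2*a/‖E1-w‖ ≤ 2*a/((3/4)*r1) := by
            apply div_le_div_of_nonneg_left (by positivity) hpos hd1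
        _ = (8/3)*a*r1⁻¹ := by field_simp; ring
        _ ≤ (8/3)*a*(1/16)^(k+1) := by
            have hr1r2 : r1⁻¹ = r2 := by rw [hr1, hr2, ← Real.exp_neg]
            rw [hr1r2]
            nlinarith
    have hb2 : ‖2*E2/(E2 - w)‖ ≤ (8/3) * a * (1/16)^k := by
      rw [norm_div, norm_mul]
      have h2 : ‖(2:ℂ)‖ = 2 := by simp
      rw [h2, hn2]
      have hpos : (0:ℝ) < (3/4)*a := by linarith
      calc 2*r2/‖E2-w‖ ≤ 2*r2/((3/4)*a) := by
            apply div_le_div_of_nonneg_left (by positivity) hpos hd2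
        _ ≤ (8/3)*a*(1/16)^k := by
            rw [div_le_iff₀ hpos] at *
            nlinarith [pow_nonneg (by norm_num : (0:ℝ) ≤ 1/16) k]
    calc ‖2*w/(E1-w) + 2*E2/(E2-w)‖ ≤ ‖2*w/(E1-w)‖ + ‖2*E2/(E2-w)‖ := norm_add_le _ _
      _ ≤ (8/3)*a*(1/16)^(k+1) + (8/3)*a*(1/16)^k := by linarith
      _ = (17/6*a)*(1/16)^k := by ring
  -- summability
  have hgeo : Summable (fun k : ℕ => (17/6*a) * (1/16)^k) :=
    (summable_geometric_of_lt_one (by norm_num) (by norm_num)).mul_left _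
  have hsummable : Summable g := Summable.of_norm_bounded hgeo key
  set T : ℂ := ∑' k, g k with hT
  refine ⟨f 0 + T, ?_, ?_⟩
  · have heq : ∀ N : ℕ, annulusSum p w N = f 0 + ∑ k ∈ Finset.range N, g k := by
      intro N
      rw [annulusSum, icc_sum_eq f N]
    simp only [heq]
    exact (hsummable.hasSum.tendsto_sum_nat).const_add _
  · have h1w : ‖(1:ℂ) - w‖ ≥ 3/4 := by
      have := norm_sub_norm_le (1:ℂ) w
      have haw' : ‖w‖ = a := rfl
      rw [haw'] at this
      simp only [norm_one] at this
      linarith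
    have h1wne : (1:ℂ) - w ≠ 0 := by
      intro h; rw [h] at h1w; simp at h1w; linarith
    have hf0 : f 0 = (1 + w)/(1 - w) := by
      simp [hfdef]
    have hid : 1 - (f 0 + T) = -(2*w/(1-w)) + -T := by
      rw [hf0]
      field_simp
      ring
    have hTb : ‖T‖ ≤ (17/6*a) * (1 - 1/16)⁻¹ := by
      apply tsum_of_norm_bounded (HasSum.mul_left _ (hasSum_geometric_of_lt_one (by norm_num) (by norm_num))) key
    have hnum : ‖2*w/(1-w)‖ ≤ (8/3) * a := by
      rw [norm_div, norm_mul]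
      have h2 : ‖(2:ℂ)‖ = 2 := by simp
      have haw' : ‖w‖ = a := rfl
      rw [h2, haw']
      rw [div_le_iff₀ (by linarith : (0:ℝ) < ‖(1:ℂ)-w‖)]
      nlinarith
    rw [hid]
    calc ‖-(2*w/(1-w)) + -T‖ ≤ ‖-(2*w/(1-w))‖ + ‖-T‖ := norm_add_le _ _
      _ = ‖2*w/(1-w)‖ + ‖T‖ := by rw [norm_neg, norm_neg]
      _ ≤ (8/3)*a + (17/6*a)*(1-1/16)⁻¹ := by linarith
      _ ≤ 8 * a := by nlinarith
      _ = 8 * Real.exp (-p) / ‖z‖ := by rw [haw]; ring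
end
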